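/- arXiv:1403.6313 — 5 statements merged into one kernel-verified Lean document; each statement's English description precedes it below -/
import Mathlib

section
/- Let k ∈ ℕ and let φ : Matrix (Fin k) (Fin k) ℝ → ℝ be continuously differentiable (C¹) and satisfy φ(PᵀMP) = φ(M) for every symmetric matrix M and every orthogonal matrix P. Then for every diagonal matrix D and every pair of indices i ≠ j, the derivative of φ at D in the direction of the symmetric matrix A having entries A_{ij} = A_{ji} = 1 and all other entries 0 vanishes: (fderiv ℝ φ D)(A) = 0. -/
open Matrix

attribute [local instance] Matrix.normedAddCommGroup Matrix.normedSpace

/-- if `φ` is C¹ and invariant under orthogonal conjugation on symmetric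
matrices, then its derivative at any diagonal matrix vanishes in the direction of the
elementary symmetric off-diagonal matrix `A` with `A i j = A j i = 1`. -/
theorem stmt1 {k : ℕ} (φ : Matrix (Fin k) (Fin k) ℝ → ℝ)
    (hφ1 : ContDiff ℝ 1 φ)
    (hφ2 : ∀ (M P : Matrix (Fin k) (Fin k) ℝ), M.IsSymm → Pᵀ * P = 1 →
      φ (Pᵀ * M * P) = φ M)
    (D : Matrix (Fin k) (Fin k) ℝ) (hD : D.IsDiag)
    (i j : Fin k) (hij : i ≠ j) :
    fderiv ℝ φ D
      (Matrix.of fun a b => if (a = i ∧ b = j) ∨ (a = j ∧ b = i) then (1 : ℝ) else 0) = 0 := by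
  set A : Matrix (Fin k) (Fin k) ℝ :=
    Matrix.of fun a b => if (a = i ∧ b = j) ∨ (a = j ∧ b = i) then (1 : ℝ) else 0 with hA
  set P : Matrix (Fin k) (Fin k) ℝ := Matrix.diagonal (fun a => if a = i then -1 else 1)
    with hPdef
  have hPt : Pᵀ = P := Matrix.diagonal_transpose _
  have hPO : Pᵀ * P = 1 := by
    rw [hPt, hPdef, Matrix.diagonal_mul_diagonal]
    ext a b
    by_cases h : a = b <;>
      simp [Matrix.diagonal_apply, Matrix.one_apply, h] <;> split_ifs <;> norm_num
  have hAsymm : A.IsSymm := by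
    ext a b
    simp only [Matrix.transpose_apply, hA, Matrix.of_apply]
    split_ifs <;> first | rfl | tauto
  have hAaa : ∀ a, A a a = 0 := by
    intro a
    simp only [hA, Matrix.of_apply]
    rw [if_neg]
    rintro (⟨h1, h2⟩ | ⟨h1, h2⟩) <;> exact hij (h1 ▸ h2 ▸ rfl)
  have key : ∀ t : ℝ, Pᵀ * (D + t • A) * P = D + (-t) • A := by
    intro t
    rw [hPt]
    ext a b
    rw [hPdef]
    simp only [Matrix.diagonal_mul, Matrix.mul_diagonal, Matrix.add_apply,
      Matrix.smul_apply, smul_eq_mul]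
    by_cases hab : a = b
    · subst hab
      rw [hAaa]
      split_ifs <;> ring
    · rw [hD hab]
      by_cases hAab : (a = i ∧ b = j) ∨ (a = j ∧ b = i)
      · simp only [hA, Matrix.of_apply, if_pos hAab]
        rcases hAab with ⟨h1, h2⟩ | ⟨h1, h2⟩ <;> subst h1 <;> subst h2 <;>
          simp [hij, Ne.symm hij] <;> ring
      · simp only [hA, Matrix.of_apply, if_neg hAab]
        split_ifs <;> ring
  have feven : ∀ t : ℝ, φ (D + (-t) • A) = φ (D + t • A) := by
    intro t
    have hsymm : (D + t • A).IsSymm := (hD.isSymm.add (hAsymm.smul t))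
    have := hφ2 (D + t • A) P hsymm hPO
    rw [key t] at this
    exact this
  have hline : HasDerivAt (fun t : ℝ => D + t • A) A 0 := by
    have h := ((hasDerivAt_id (0 : ℝ)).smul_const A).const_add D
    simp only [one_smul, id_eq] at h
    exact h
  have hφdiff : HasFDerivAt φ (fderiv ℝ φ D) D :=
    ((hφ1.differentiable one_ne_zero) D).hasFDerivAt
  have hd : HasDerivAt (fun t : ℝ => φ (D + t • A)) (fderiv ℝ φ D A) 0 := by
    have hφdiff' : HasFDerivAt φ (fderiv ℝ φ D) ((fun t : ℝ => D + t • A) 0) := by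
      simpa using hφdiff
    exact hφdiff'.comp_hasDerivAt 0 hline
  have hd2 : HasDerivAt (fun t : ℝ => φ (D + t • A)) (-(fderiv ℝ φ D A)) 0 := by
    have hneg : HasDerivAt (fun t : ℝ => -t) (-1 : ℝ) 0 := (hasDerivAt_id (0 : ℝ)).neg
    have hd' : HasDerivAt (fun t : ℝ => φ (D + t • A)) (fderiv ℝ φ D A)
        ((fun t : ℝ => -t) 0) := by simpa using hd
    have h1 : HasDerivAt (fun t : ℝ => φ (D + (-t) • A)) (fderiv ℝ φ D A * (-1)) 0 := by
      have := hd'.comp 0 hneg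
      exact this
    have h2 : (fun t : ℝ => φ (D + (-t) • A)) = fun t : ℝ => φ (D + t • A) :=
      funext fun t => feven t
    rw [h2] at h1
    simpa using h1
  have := hd.unique hd2
  linarith
end

section
/- Let H be a real Hilbert space, k ∈ ℕ, and let u = (u₁,…,u_k) ∈ Hᵏ be an orthonormal family, i.e. ⟨u_i, u_j⟩ = δ_{ij} for all i, j. Define the Gram map G : Hᵏ → ℝ^{k(k+1)/2} (indexed by pairs (i,j) with i ≤ j) by G(w)_{ij} = ⟨w_i, w_j⟩. Then G is Fréchet differentiable and its Fréchet derivative at u, G'(u) : Hᵏ → ℝ^{k(k+1)/2}, given by G'(u)(φ)_{ij} = ⟨φ_i, u_j⟩ + ⟨u_i, φ_j⟩, is surjective. -/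
open scoped RealInnerProductSpace

/-- The Gram map `G(w)_{(i,j)} = ⟪w_i, w_j⟫` for `i ≤ j`, from the product Hilbert space
`Hᵏ` to the Euclidean space indexed by pairs `(i,j)` with `i ≤ j`. -/
noncomputable def gramMap (k : ℕ) {H : Type*} [NormedAddCommGroup H] [InnerProductSpace ℝ H]
    (w : PiLp 2 (fun _ : Fin k => H)) :
    EuclideanSpace ℝ {p : Fin k × Fin k // p.1 ≤ p.2} :=
  WithLp.toLp 2 (fun p => ⟪w p.1.1, w p.1.2⟫)

/-- at an orthonormal family `u ∈ Hᵏ`, the Gram map is Fréchet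
differentiable with derivative `φ ↦ (⟪φ_i, u_j⟫ + ⟪u_i, φ_j⟫)_{i ≤ j}`, and this
derivative is surjective. -/
theorem stmt2 {H : Type*} [NormedAddCommGroup H] [InnerProductSpace ℝ H] [CompleteSpace H]
    (k : ℕ) (u : PiLp 2 (fun _ : Fin k => H)) (hu : Orthonormal ℝ (fun i => u i)) :
    ∃ G' : PiLp 2 (fun _ : Fin k => H) →L[ℝ]
        EuclideanSpace ℝ {p : Fin k × Fin k // p.1 ≤ p.2},
      HasFDerivAt (gramMap k) G' u ∧
      (∀ (φ : PiLp 2 (fun _ : Fin k => H)) (p : {p : Fin k × Fin k // p.1 ≤ p.2}),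
        G' φ p = ⟪φ p.1.1, u p.1.2⟫ + ⟪u p.1.1, φ p.1.2⟫) ∧
      Function.Surjective G' := by
  classical
  set ι := {p : Fin k × Fin k // p.1 ≤ p.2}
  -- derivative components
  set D : ∀ _ : ι, PiLp 2 (fun _ : Fin k => H) →L[ℝ] ℝ :=
    fun p => (fderivInnerCLM ℝ (u p.1.1, u p.1.2)).comp
      ((PiLp.proj 2 (fun _ : Fin k => H) p.1.1).prod
        (PiLp.proj 2 (fun _ : Fin k => H) p.1.2)) with hD
  set e := (PiLp.continuousLinearEquiv 2 ℝ (fun _ : ι => ℝ)).symm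
  refine ⟨(e : (∀ _ : ι, ℝ) →L[ℝ] EuclideanSpace ℝ ι).comp
      (ContinuousLinearMap.pi D), ?_, ?_, ?_⟩
  · have h1 : ∀ p : ι, HasFDerivAt (fun w : PiLp 2 (fun _ : Fin k => H) =>
        ⟪w p.1.1, w p.1.2⟫) (D p) u := by
      intro p
      exact ((PiLp.proj 2 (fun _ : Fin k => H) p.1.1).hasFDerivAt).inner ℝ
        ((PiLp.proj 2 (fun _ : Fin k => H) p.1.2).hasFDerivAt)
    have h2 : HasFDerivAt (fun w : PiLp 2 (fun _ : Fin k => H) => fun p : ι =>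
        ⟪w p.1.1, w p.1.2⟫) (ContinuousLinearMap.pi D) u :=
      hasFDerivAt_pi.2 h1
    exact (e.hasFDerivAt).comp u h2
  · intro φ p
    change D p φ = _
    simp only [D, ContinuousLinearMap.comp_apply, ContinuousLinearMap.prod_apply,
      fderivInnerCLM_apply, PiLp.proj_apply]
    rw [add_comm]
  · intro v
    set a : Fin k → Fin k → ℝ := fun i j =>
      if h : i ≤ j then v ⟨(i, j), h⟩ / 2 else v ⟨(j, i), le_of_not_ge h⟩ / 2 with ha
    refine ⟨WithLp.toLp 2 (fun i => ∑ j, a i j • u j), ?_⟩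
    have hinner : ∀ i j : Fin k, ⟪∑ l, a i l • u l, u j⟫ = a i j := by
      intro i j
      simp [sum_inner, real_inner_smul_left, orthonormal_iff_ite.1 hu]
    ext p
    show D p (WithLp.toLp 2 (fun i => ∑ l, a i l • u l)) = v p
    simp only [D, ContinuousLinearMap.comp_apply, ContinuousLinearMap.prod_apply,
      fderivInnerCLM_apply, PiLp.proj_apply]
    obtain ⟨⟨i, j⟩, hp⟩ := p
    simp only at hp ⊢
    rw [real_inner_comm, hinner, hinner]
    by_cases h : j ≤ i
    · have hij : i = j := le_antisymm hp h
      subst hij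
      simp only [ha, dif_pos (le_refl i)]
      ring
    · simp only [ha, dif_pos hp, dif_neg h]
      ring
end

section
/- Let N, k ∈ ℕ with N ≥ 2, let Ω ⊆ ℝᴺ be open, let H : ℝᵏ × ℝᵏ → ℝ be C¹, and let l₁,…,l_k, m₁,…,m_k ∈ ℝ. Let w = (w₁,…,w_k) and z = (z₁,…,z_k) be C² functions on Ω satisfying, for each i, −l_i Δw_i = ∂H/∂s_i(w, z) and −m_i Δz_i = ∂H/∂t_i(w, z) on Ω, where ∂H/∂s_i and ∂H/∂t_i denote the partial derivatives of H(s,t) in its first and second group of variables. Then for every C¹ vector field Y : ℝᴺ → ℝᴺ with compact support contained in Ω one has ∑_{i=1}^k l_i ∫_Ω ( ⟨(DY)∇w_i, ∇w_i⟩ − ½ (div Y) |∇w_i|² ) dx + ∑_{i=1}^k m_i ∫_Ω ( ⟨(DY)∇z_i, ∇z_i⟩ − ½ (div Y) |∇z_i|² ) dx + ∫_Ω H(w(x), z(x)) (div Y)(x) dx = 0. -/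
open MeasureTheory Metric
open scoped RealInnerProductSpace

/-- The Laplacian: sum of the pure second partial derivatives. -/
noncomputable def lap {N : ℕ} (f : EuclideanSpace ℝ (Fin N) → ℝ)
    (x : EuclideanSpace ℝ (Fin N)) : ℝ :=
  ∑ i : Fin N, fderiv ℝ (fun y => fderiv ℝ f y (EuclideanSpace.single i 1)) x
    (EuclideanSpace.single i 1)

/-- The divergence of a vector field on `ℝᴺ`. -/
noncomputable def divg {N : ℕ} (Y : EuclideanSpace ℝ (Fin N) → EuclideanSpace ℝ (Fin N))
    (x : EuclideanSpace ℝ (Fin N)) : ℝ :=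
  ∑ i : Fin N, fderiv ℝ (fun y => Y y i) x (EuclideanSpace.single i 1)


section Helpers

variable {N : ℕ}

lemma euclid_sum_single (v : EuclideanSpace ℝ (Fin N)) :
    ∑ i, v i • (EuclideanSpace.single i (1:ℝ) : EuclideanSpace ℝ (Fin N)) = v := by
  ext j
  have : (∑ i, v i • (EuclideanSpace.single i (1:ℝ) : EuclideanSpace ℝ (Fin N))) j
      = ∑ i, (v i • (EuclideanSpace.single i (1:ℝ) : EuclideanSpace ℝ (Fin N))) j := by
    rw [WithLp.ofLp_sum]; exact Finset.sum_apply _ _ _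
  rw [this]; simp [EuclideanSpace.single_apply]

lemma comp_proj_diff {Z : EuclideanSpace ℝ (Fin N) → EuclideanSpace ℝ (Fin N)}
    {x : EuclideanSpace ℝ (Fin N)} (hZ : DifferentiableAt ℝ Z x) (i : Fin N) :
    DifferentiableAt ℝ (fun y => Z y i) x := by
  have : (fun y => Z y i) = (EuclideanSpace.proj (𝕜 := ℝ) i) ∘ Z := rfl
  rw [this]; exact (EuclideanSpace.proj (𝕜 := ℝ) i).differentiableAt.comp x hZ

lemma fderiv_comp_proj {Z : EuclideanSpace ℝ (Fin N) → EuclideanSpace ℝ (Fin N)}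
    {x : EuclideanSpace ℝ (Fin N)} (hZ : DifferentiableAt ℝ Z x) (i : Fin N)
    (v : EuclideanSpace ℝ (Fin N)) :
    fderiv ℝ (fun y => Z y i) x v = fderiv ℝ Z x v i := by
  have h : (fun y => Z y i) = (EuclideanSpace.proj (𝕜 := ℝ) i) ∘ Z := rfl
  rw [h, fderiv_comp x (EuclideanSpace.proj (𝕜 := ℝ) i).differentiableAt hZ, ContinuousLinearMap.fderiv]; rfl

lemma divg_smul {c : EuclideanSpace ℝ (Fin N) → ℝ} {Z : EuclideanSpace ℝ (Fin N) → EuclideanSpace ℝ (Fin N)}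
    {x : EuclideanSpace ℝ (Fin N)} (hc : DifferentiableAt ℝ c x) (hZ : DifferentiableAt ℝ Z x) :
    divg (fun y => c y • Z y) x = fderiv ℝ c x (Z x) + c x * divg Z x := by
  have key : ∀ i : Fin N, fderiv ℝ (fun y => (c y • Z y) i) x (EuclideanSpace.single i 1)
      = fderiv ℝ c x (EuclideanSpace.single i 1) * Z x i
        + c x * fderiv ℝ (fun y => Z y i) x (EuclideanSpace.single i 1) := by
    intro i
    have h1 : (fun y => (c y • Z y) i) = fun y => c y * Z y i := rfl
    rw [h1, fderiv_fun_mul hc (comp_proj_diff hZ i)]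
    simp only [ContinuousLinearMap.add_apply, ContinuousLinearMap.smul_apply, smul_eq_mul]
    ring
  have h2 : fderiv ℝ c x (Z x) = ∑ i, Z x i * fderiv ℝ c x (EuclideanSpace.single i 1) := by
    conv_lhs => rw [← euclid_sum_single (Z x)]
    rw [map_sum]
    simp [smul_eq_mul]
  simp only [divg, key, Finset.sum_add_distrib, h2, Finset.mul_sum]
  congr 1
  exact Finset.sum_congr rfl fun i _ => mul_comm _ _

lemma divg_add {Z₁ Z₂ : EuclideanSpace ℝ (Fin N) → EuclideanSpace ℝ (Fin N)}
    {x : EuclideanSpace ℝ (Fin N)} (h1 : DifferentiableAt ℝ Z₁ x) (h2 : DifferentiableAt ℝ Z₂ x) :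
    divg (fun y => Z₁ y + Z₂ y) x = divg Z₁ x + divg Z₂ x := by
  simp only [divg, ← Finset.sum_add_distrib]
  refine Finset.sum_congr rfl fun i _ => ?_
  have h : (fun y => (Z₁ y + Z₂ y) i) = fun y => Z₁ y i + Z₂ y i := rfl
  rw [h, fderiv_fun_add (comp_proj_diff h1 i) (comp_proj_diff h2 i)]
  simp

lemma divg_sub {Z₁ Z₂ : EuclideanSpace ℝ (Fin N) → EuclideanSpace ℝ (Fin N)}
    {x : EuclideanSpace ℝ (Fin N)} (h1 : DifferentiableAt ℝ Z₁ x) (h2 : DifferentiableAt ℝ Z₂ x) :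
    divg (fun y => Z₁ y - Z₂ y) x = divg Z₁ x - divg Z₂ x := by
  simp only [divg, ← Finset.sum_sub_distrib]
  refine Finset.sum_congr rfl fun i _ => ?_
  have h : (fun y => (Z₁ y - Z₂ y) i) = fun y => Z₁ y i - Z₂ y i := rfl
  rw [h, fderiv_fun_sub (comp_proj_diff h1 i) (comp_proj_diff h2 i)]
  simp

lemma divg_const_smul {Z : EuclideanSpace ℝ (Fin N) → EuclideanSpace ℝ (Fin N)}
    {x : EuclideanSpace ℝ (Fin N)} (h : DifferentiableAt ℝ Z x) (c : ℝ) :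
    divg (fun y => c • Z y) x = c * divg Z x := by
  have := divg_smul (c := fun _ => c) (differentiableAt_const c) h
  simpa using this

lemma divg_fun_sum {ι : Type*} (s : Finset ι)
    {Z : ι → EuclideanSpace ℝ (Fin N) → EuclideanSpace ℝ (Fin N)}
    {x : EuclideanSpace ℝ (Fin N)} (h : ∀ i ∈ s, DifferentiableAt ℝ (Z i) x) :
    divg (fun y => ∑ i ∈ s, Z i y) x = ∑ i ∈ s, divg (Z i) x := by
  classical
  induction s using Finset.induction_on with
  | empty => simp [divg]
  | insert _ _ hns ih =>
      rename_i a s'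
      simp only [Finset.sum_insert hns]
      have hd : DifferentiableAt ℝ (fun y => ∑ i ∈ s', Z i y) x := by
        apply DifferentiableAt.fun_sum
        intro i hi; exact h i (Finset.mem_insert_of_mem hi)
      rw [show (fun y => Z a y + ∑ i ∈ s', Z i y) = (fun y => Z a y + (fun t => ∑ i ∈ s', Z i t) y) from rfl]
      rw [divg_add (h a (Finset.mem_insert_self a s')) hd,
        ih (fun i hi => h i (Finset.mem_insert_of_mem hi))]


variable {f : EuclideanSpace ℝ (Fin N) → ℝ} {Ω : Set (EuclideanSpace ℝ (Fin N))}
  {x : EuclideanSpace ℝ (Fin N)}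

lemma inner_gradient (f : EuclideanSpace ℝ (Fin N) → ℝ) (x v : EuclideanSpace ℝ (Fin N)) :
    ⟪gradient f x, v⟫ = fderiv ℝ f x v :=
  InnerProductSpace.toDual_symm_apply

lemma gradient_apply (f : EuclideanSpace ℝ (Fin N) → ℝ) (x : EuclideanSpace ℝ (Fin N)) (j : Fin N) :
    gradient f x j = fderiv ℝ f x (EuclideanSpace.single j 1) := by
  rw [← inner_gradient, EuclideanSpace.inner_single_right]
  simp

lemma divg_gradient_eq_lap (f : EuclideanSpace ℝ (Fin N) → ℝ) (x : EuclideanSpace ℝ (Fin N)) :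
    divg (gradient f) x = lap f x := by
  unfold divg lap
  refine Finset.sum_congr rfl fun j _ => ?_
  have h : (fun y => gradient f y j) = fun y => fderiv ℝ f y (EuclideanSpace.single j 1) :=
    funext fun y => gradient_apply f y j
  rw [h]

lemma gradient_contDiffOn (hΩ : IsOpen Ω) (hf : ContDiffOn ℝ 2 f Ω) :
    ContDiffOn ℝ 1 (gradient f) Ω := by
  have h1 : ContDiffOn ℝ 1 (fderiv ℝ f) Ω := hf.fderiv_of_isOpen hΩ (by norm_num)
  have h2 : gradient f = fun y => (InnerProductSpace.toDual ℝ
      (EuclideanSpace ℝ (Fin N))).symm (fderiv ℝ f y) := rfl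
  rw [h2]
  exact (InnerProductSpace.toDual ℝ _).symm.contDiff.comp_contDiffOn h1

lemma gradient_differentiableAt (hΩ : IsOpen Ω) (hf : ContDiffOn ℝ 2 f Ω) (hx : x ∈ Ω) :
    DifferentiableAt ℝ (gradient f) x :=
  ((gradient_contDiffOn hΩ hf).differentiableOn one_ne_zero).differentiableAt (hΩ.mem_nhds hx)

lemma f_differentiableAt (hΩ : IsOpen Ω) (hf : ContDiffOn ℝ 2 f Ω) (hx : x ∈ Ω) :
    DifferentiableAt ℝ f x :=
  ((hf.differentiableOn (by norm_num)).differentiableAt (hΩ.mem_nhds hx))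

lemma fderiv_fderiv_apply (hdf : DifferentiableAt ℝ (fderiv ℝ f) x)
    (u v : EuclideanSpace ℝ (Fin N)) :
    fderiv ℝ (fun y => fderiv ℝ f y u) x v = fderiv ℝ (fderiv ℝ f) x v u := by
  have h : (fun y => fderiv ℝ f y u)
      = (ContinuousLinearMap.apply ℝ ℝ u) ∘ (fderiv ℝ f) := rfl
  rw [h, fderiv_comp x (ContinuousLinearMap.apply ℝ ℝ u).differentiableAt hdf]
  simp

lemma inner_fderiv_gradient (hΩ : IsOpen Ω) (hf : ContDiffOn ℝ 2 f Ω) (hx : x ∈ Ω)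
    (u v : EuclideanSpace ℝ (Fin N)) :
    ⟪u, fderiv ℝ (gradient f) x v⟫ = fderiv ℝ (fderiv ℝ f) x v u := by
  have hdf : DifferentiableAt ℝ (fderiv ℝ f) x :=
    (((hf.fderiv_of_isOpen (m := 1) hΩ (by norm_num)).differentiableOn
      one_ne_zero).differentiableAt (hΩ.mem_nhds hx))
  have hg : DifferentiableAt ℝ (gradient f) x := gradient_differentiableAt hΩ hf hx
  have hcomp : ∀ i : Fin N, (fderiv ℝ (gradient f) x v) i
      = fderiv ℝ (fderiv ℝ f) x v (EuclideanSpace.single i 1) := by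
    intro i
    rw [← fderiv_comp_proj hg i v]
    have h : (fun y => gradient f y i) = fun y => fderiv ℝ f y (EuclideanSpace.single i 1) :=
      funext fun y => gradient_apply f y i
    rw [h, fderiv_fderiv_apply hdf]
  have hinner : ⟪u, fderiv ℝ (gradient f) x v⟫
      = ∑ i, u i * (fderiv ℝ (gradient f) x v) i := by
    simp [PiLp.inner_apply, RCLike.inner_apply, conj_trivial, mul_comm]
  rw [hinner]
  simp only [hcomp]
  have : ∑ i, u i * fderiv ℝ (fderiv ℝ f) x v (EuclideanSpace.single i 1)
      = fderiv ℝ (fderiv ℝ f) x v (∑ i, u i • (EuclideanSpace.single i (1:ℝ))) := by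
    rw [map_sum]
    simp [smul_eq_mul]
  rw [this, euclid_sum_single]

lemma hessian_symm (hΩ : IsOpen Ω) (hf : ContDiffOn ℝ 2 f Ω) (hx : x ∈ Ω)
    (u v : EuclideanSpace ℝ (Fin N)) :
    ⟪u, fderiv ℝ (gradient f) x v⟫ = ⟪v, fderiv ℝ (gradient f) x u⟫ := by
  rw [inner_fderiv_gradient hΩ hf hx, inner_fderiv_gradient hΩ hf hx]
  exact (hf.contDiffAt (hΩ.mem_nhds hx)).isSymmSndFDerivAt (by simp) v u


lemma fderiv_apply_continuous {f : EuclideanSpace ℝ (Fin N) → ℝ} (hf : ContDiff ℝ 1 f)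
    (v : EuclideanSpace ℝ (Fin N)) : Continuous fun x => fderiv ℝ f x v :=
  (hf.continuous_fderiv one_ne_zero).clm_apply continuous_const

lemma fderiv_apply_hcs {f : EuclideanSpace ℝ (Fin N) → ℝ} (hfc : HasCompactSupport f)
    (v : EuclideanSpace ℝ (Fin N)) : HasCompactSupport fun x => fderiv ℝ f x v := by
  apply HasCompactSupport.intro hfc
  intro x hx
  have : fderiv ℝ f x = 0 := by
    by_contra h
    exact hx (support_fderiv_subset ℝ (by simpa [Function.mem_support] using h))
  simp [this]

lemma integral_fderiv_apply_eq_zero {f : EuclideanSpace ℝ (Fin N) → ℝ}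
    (hf : ContDiff ℝ 1 f) (hfc : HasCompactSupport f) (v : EuclideanSpace ℝ (Fin N)) :
    ∫ x, fderiv ℝ f x v = 0 := by
  have key := integral_mul_fderiv_eq_neg_fderiv_mul_of_integrable
    (μ := (volume : Measure (EuclideanSpace ℝ (Fin N))))
    (f := f) (g := fun _ => (1:ℝ)) (v := v)
    ?_ ?_ ?_ (fun x _ => hf.differentiable one_ne_zero x) (fun x _ => differentiableAt_const (1:ℝ))
  · simp only [fderiv_fun_const, Pi.zero_apply, ContinuousLinearMap.zero_apply, mul_zero, mul_one,
      integral_zero] at key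
    linarith [key]
  · simp only [mul_one]
    exact ((fderiv_apply_continuous hf v).integrable_of_hasCompactSupport (fderiv_apply_hcs hfc v))
  · simp only [fderiv_fun_const, Pi.zero_apply, ContinuousLinearMap.zero_apply, mul_zero]
    exact integrable_zero _ _ _
  · simp only [mul_one]
    exact hf.continuous.integrable_of_hasCompactSupport hfc

lemma comp_proj_c1 {V : EuclideanSpace ℝ (Fin N) → EuclideanSpace ℝ (Fin N)}
    (hV : ContDiff ℝ 1 V) (i : Fin N) : ContDiff ℝ 1 fun y => V y i := by
  have h : (fun y => V y i) = (EuclideanSpace.proj (𝕜 := ℝ) i) ∘ V := rfl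
  rw [h]; exact (EuclideanSpace.proj (𝕜 := ℝ) i).contDiff.comp hV

lemma comp_proj_hcs {V : EuclideanSpace ℝ (Fin N) → EuclideanSpace ℝ (Fin N)}
    (hVc : HasCompactSupport V) (i : Fin N) : HasCompactSupport fun y => V y i := by
  apply HasCompactSupport.intro hVc
  intro x hx
  rw [image_eq_zero_of_notMem_tsupport hx]
  rfl

lemma integral_divg_eq_zero {V : EuclideanSpace ℝ (Fin N) → EuclideanSpace ℝ (Fin N)}
    (hV : ContDiff ℝ 1 V) (hVc : HasCompactSupport V) :
    ∫ x, divg V x = 0 := by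
  unfold divg
  rw [integral_finset_sum]
  · exact Finset.sum_eq_zero fun i _ =>
      integral_fderiv_apply_eq_zero (comp_proj_c1 hV i) (comp_proj_hcs hVc i) _
  · intro i _
    exact (fderiv_apply_continuous (comp_proj_c1 hV i) _).integrable_of_hasCompactSupport
      (fderiv_apply_hcs (comp_proj_hcs hVc i) _)


section Hcomp
variable {k : ℕ} {H : EuclideanSpace ℝ (Fin k) × EuclideanSpace ℝ (Fin k) → ℝ}
  {w z : Fin k → EuclideanSpace ℝ (Fin N) → ℝ}

lemma pi_hasFDerivAt (hw : ∀ j, DifferentiableAt ℝ (w j) x) :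
    HasFDerivAt (fun y => ((EuclideanSpace.equiv (Fin k) ℝ).symm fun j => w j y))
      ((EuclideanSpace.equiv (Fin k) ℝ).symm.toContinuousLinearMap.comp
        (ContinuousLinearMap.pi fun j => fderiv ℝ (w j) x)) x := by
  have h1 : HasFDerivAt (fun y => (fun j => w j y : Fin k → ℝ))
      (ContinuousLinearMap.pi fun j => fderiv ℝ (w j) x) x :=
    hasFDerivAt_pi.2 fun j => (hw j).hasFDerivAt
  exact ((EuclideanSpace.equiv (Fin k) ℝ).symm.toContinuousLinearMap.hasFDerivAt).comp x h1

lemma comp_H_fderiv_apply (hH : ContDiff ℝ 1 H)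
    (hw : ∀ j, DifferentiableAt ℝ (w j) x) (hz : ∀ j, DifferentiableAt ℝ (z j) x)
    (v : EuclideanSpace ℝ (Fin N)) :
    fderiv ℝ (fun y => H ((WithLp.toLp 2 (fun j => w j y)), (WithLp.toLp 2 (fun j => z j y)))) x v
      = (∑ j, fderiv ℝ (w j) x v
          * fderiv ℝ H ((WithLp.toLp 2 (fun j => w j x)), (WithLp.toLp 2 (fun j => z j x))) (EuclideanSpace.single j 1, 0))
      + (∑ j, fderiv ℝ (z j) x v
          * fderiv ℝ H ((WithLp.toLp 2 (fun j => w j x)), (WithLp.toLp 2 (fun j => z j x))) (0, EuclideanSpace.single j 1)) := by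
  have hu : HasFDerivAt (fun y => (((EuclideanSpace.equiv (Fin k) ℝ).symm fun j => w j y),
      ((EuclideanSpace.equiv (Fin k) ℝ).symm fun j => z j y)))
      (((EuclideanSpace.equiv (Fin k) ℝ).symm.toContinuousLinearMap.comp
        (ContinuousLinearMap.pi fun j => fderiv ℝ (w j) x)).prod
       ((EuclideanSpace.equiv (Fin k) ℝ).symm.toContinuousLinearMap.comp
        (ContinuousLinearMap.pi fun j => fderiv ℝ (z j) x))) x :=
    (pi_hasFDerivAt hw).prodMk (pi_hasFDerivAt hz)
  set ux : EuclideanSpace ℝ (Fin k) × EuclideanSpace ℝ (Fin k) :=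
    (((EuclideanSpace.equiv (Fin k) ℝ).symm fun j => w j x),
     ((EuclideanSpace.equiv (Fin k) ℝ).symm fun j => z j x)) with hux
  have hHd : HasFDerivAt H (fderiv ℝ H ux) ux := ((hH.differentiable one_ne_zero) ux).hasFDerivAt
  have hcomp := hHd.comp x hu
  have heq : (fun y => H ((WithLp.toLp 2 (fun j => w j y)), (WithLp.toLp 2 (fun j => z j y))))
      = H ∘ (fun y => (((EuclideanSpace.equiv (Fin k) ℝ).symm fun j => w j y),
          ((EuclideanSpace.equiv (Fin k) ℝ).symm fun j => z j y))) := rfl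
  rw [heq, hcomp.fderiv]
  set s : EuclideanSpace ℝ (Fin k) := WithLp.toLp 2 fun j => fderiv ℝ (w j) x v with hs
  set t : EuclideanSpace ℝ (Fin k) := WithLp.toLp 2 fun j => fderiv ℝ (z j) x v with ht
  have hdecomp : ((s, t) : EuclideanSpace ℝ (Fin k) × EuclideanSpace ℝ (Fin k))
      = (∑ j, s j • ((EuclideanSpace.single j (1:ℝ) :
        EuclideanSpace ℝ (Fin k)), (0 : EuclideanSpace ℝ (Fin k))))
      + (∑ j, t j • ((0 : EuclideanSpace ℝ (Fin k)), (EuclideanSpace.single j (1:ℝ) :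
        EuclideanSpace ℝ (Fin k)))) := by
    apply Prod.ext
    · simp [Prod.fst_sum, euclid_sum_single, Prod.smul_mk]
    · simp [Prod.snd_sum, euclid_sum_single, Prod.smul_mk]
  show fderiv ℝ H ux ((((EuclideanSpace.equiv (Fin k) ℝ).symm.toContinuousLinearMap.comp
        (ContinuousLinearMap.pi fun j => fderiv ℝ (w j) x)).prod
       ((EuclideanSpace.equiv (Fin k) ℝ).symm.toContinuousLinearMap.comp
        (ContinuousLinearMap.pi fun j => fderiv ℝ (z j) x))) v) = _
  have hval : ((((EuclideanSpace.equiv (Fin k) ℝ).symm.toContinuousLinearMap.comp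
        (ContinuousLinearMap.pi fun j => fderiv ℝ (w j) x)).prod
       ((EuclideanSpace.equiv (Fin k) ℝ).symm.toContinuousLinearMap.comp
        (ContinuousLinearMap.pi fun j => fderiv ℝ (z j) x))) v)
      = ((s, t) : EuclideanSpace ℝ (Fin k) × EuclideanSpace ℝ (Fin k)) := rfl
  rw [hval, hdecomp, map_add, map_sum, map_sum]
  have h1 : ∀ j : Fin k, ((s j • EuclideanSpace.single j (1:ℝ) : EuclideanSpace ℝ (Fin k)),
      (0 : EuclideanSpace ℝ (Fin k))) = s j • ((EuclideanSpace.single j (1:ℝ) :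
      EuclideanSpace ℝ (Fin k)), (0 : EuclideanSpace ℝ (Fin k))) := fun j => by simp
  have h2 : ∀ j : Fin k, ((0 : EuclideanSpace ℝ (Fin k)),
      (t j • EuclideanSpace.single j (1:ℝ) : EuclideanSpace ℝ (Fin k)))
      = t j • ((0 : EuclideanSpace ℝ (Fin k)), (EuclideanSpace.single j (1:ℝ) :
      EuclideanSpace ℝ (Fin k))) := fun j => by simp
  simp only [h1, h2, _root_.map_smul, smul_eq_mul]
  rfl

end Hcomp


lemma divg_eq_zero_of_eventually_zero {V : EuclideanSpace ℝ (Fin N) → EuclideanSpace ℝ (Fin N)}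
    {x : EuclideanSpace ℝ (Fin N)} (h : V =ᶠ[nhds x] 0) : divg V x = 0 := by
  unfold divg
  refine Finset.sum_eq_zero fun i _ => ?_
  have h2 : (fun y => V y i) =ᶠ[nhds x] (fun _ => 0) := by
    filter_upwards [h] with y hy
    simp [hy]
  rw [h2.fderiv_eq]
  simp

lemma fderiv_eq_zero_of_eventually_zero {V : EuclideanSpace ℝ (Fin N) → EuclideanSpace ℝ (Fin N)}
    {x : EuclideanSpace ℝ (Fin N)} (h : V =ᶠ[nhds x] 0) : fderiv ℝ V x = 0 := by
  have h2 : V =ᶠ[nhds x] (fun _ => 0) := h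
  rw [h2.fderiv_eq]
  exact fderiv_const_apply 0

lemma not_mem_tsupport_eventually_zero {V : EuclideanSpace ℝ (Fin N) → EuclideanSpace ℝ (Fin N)}
    {x : EuclideanSpace ℝ (Fin N)} (hx : x ∉ tsupport V) : V =ᶠ[nhds x] 0 := by
  have : IsOpen (tsupport V)ᶜ := (isClosed_tsupport V).isOpen_compl
  filter_upwards [this.mem_nhds hx] with y hy
  simpa using image_eq_zero_of_notMem_tsupport hy

lemma integrableOn_of_supp {f : EuclideanSpace ℝ (Fin N) → ℝ}
    {Ω K : Set (EuclideanSpace ℝ (Fin N))} (hΩ : IsOpen Ω) (hK : IsCompact K)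
    (hKΩ : K ⊆ Ω) (hf : ContinuousOn f Ω) (h0 : ∀ x ∈ Ω \ K, f x = 0) :
    IntegrableOn f Ω := by
  have h1 : IntegrableOn f K := (hf.mono hKΩ).integrableOn_compact hK
  have h2 : IntegrableOn f (Ω \ K) := by
    rw [integrableOn_congr_fun h0 (hΩ.measurableSet.diff hK.measurableSet)]
    exact integrableOn_zero
  exact (h1.union h2).mono_set fun x hx => by
    by_cases h : x ∈ K
    · exact Set.mem_union_left _ h
    · exact Set.mem_union_right _ ⟨hx, h⟩


section Terms
variable {Ω : Set (EuclideanSpace ℝ (Fin N))}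
  {Y : EuclideanSpace ℝ (Fin N) → EuclideanSpace ℝ (Fin N)}

lemma divg_term_eq (hΩ : IsOpen Ω) (hf : ContDiffOn ℝ 2 f Ω) (hx : x ∈ Ω)
    (hY : ContDiff ℝ 1 Y) :
    divg (fun y => ⟪Y y, gradient f y⟫ • gradient f y
      - ((1/2) * ⟪gradient f y, gradient f y⟫) • Y y) x
    = (⟪fderiv ℝ Y x (gradient f x), gradient f x⟫
        - (1/2) * divg Y x * ‖gradient f x‖^2)
      + ⟪Y x, gradient f x⟫ * lap f x := by
  have hYd : DifferentiableAt ℝ Y x := (hY.differentiable one_ne_zero) x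
  have hgd : DifferentiableAt ℝ (gradient f) x := gradient_differentiableAt hΩ hf hx
  have hinner : DifferentiableAt ℝ (fun y => ⟪Y y, gradient f y⟫) x := hYd.inner ℝ hgd
  have hinn2 : DifferentiableAt ℝ (fun y => ⟪gradient f y, gradient f y⟫) x := hgd.inner ℝ hgd
  have hnorm : DifferentiableAt ℝ (fun y => (1/2) * ⟪gradient f y, gradient f y⟫) x :=
    hinn2.const_mul _
  have hsub := divg_sub (x := x)
    (Z₁ := fun y => ⟪Y y, gradient f y⟫ • gradient f y)
    (Z₂ := fun y => ((1/2) * ⟪gradient f y, gradient f y⟫) • Y y)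
    (hinner.smul hgd) (hnorm.smul hYd)
  rw [hsub, divg_smul hinner hgd, divg_smul hnorm hYd, divg_gradient_eq_lap]
  have h1 : fderiv ℝ (fun y => ⟪Y y, gradient f y⟫) x (gradient f x)
      = ⟪Y x, fderiv ℝ (gradient f) x (gradient f x)⟫
        + ⟪fderiv ℝ Y x (gradient f x), gradient f x⟫ :=
    fderiv_inner_apply (𝕜 := ℝ) hYd hgd _
  have h2 : fderiv ℝ (fun y => (1/2) * ⟪gradient f y, gradient f y⟫) x (Y x)
      = (1/2) * (2 * ⟪gradient f x, fderiv ℝ (gradient f) x (Y x)⟫) := by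
    rw [fderiv_const_mul hinn2]
    simp only [ContinuousLinearMap.smul_apply, smul_eq_mul]
    congr 1
    rw [fderiv_inner_apply (𝕜 := ℝ) hgd hgd]
    rw [real_inner_comm (fderiv ℝ (gradient f) x (Y x)) (gradient f x)]
    ring
  rw [h1, h2, hessian_symm hΩ hf hx (Y x) (gradient f x),
    real_inner_self_eq_norm_sq (gradient f x)]
  ring
end Terms

end Helpers

/-- domain-variation identity for solutions of the Hamiltonian system
`−l_i Δw_i = ∂H/∂s_i(w,z)`, `−m_i Δz_i = ∂H/∂t_i(w,z)` on an open set `Ω ⊆ ℝᴺ`,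
tested against a compactly supported `C¹` vector field `Y`. -/
theorem stmt3 (N k : ℕ) (hN : 2 ≤ N) (Ω : Set (EuclideanSpace ℝ (Fin N))) (hΩ : IsOpen Ω)
    (H : EuclideanSpace ℝ (Fin k) × EuclideanSpace ℝ (Fin k) → ℝ) (hH : ContDiff ℝ 1 H)
    (l m : Fin k → ℝ)
    (w z : Fin k → EuclideanSpace ℝ (Fin N) → ℝ)
    (hw : ∀ i, ContDiffOn ℝ 2 (w i) Ω) (hz : ∀ i, ContDiffOn ℝ 2 (z i) Ω)
    (hpde1 : ∀ i, ∀ x ∈ Ω, -(l i) * lap (w i) x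
      = fderiv ℝ H ((WithLp.toLp 2 (fun j => w j x)), (WithLp.toLp 2 (fun j => z j x))) (EuclideanSpace.single i 1, 0))
    (hpde2 : ∀ i, ∀ x ∈ Ω, -(m i) * lap (z i) x
      = fderiv ℝ H ((WithLp.toLp 2 (fun j => w j x)), (WithLp.toLp 2 (fun j => z j x))) (0, EuclideanSpace.single i 1))
    (Y : EuclideanSpace ℝ (Fin N) → EuclideanSpace ℝ (Fin N))
    (hY : ContDiff ℝ 1 Y) (hYc : HasCompactSupport Y) (hYs : tsupport Y ⊆ Ω) :
    (∑ i, l i * ∫ x in Ω, (⟪fderiv ℝ Y x (gradient (w i) x), gradient (w i) x⟫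
        - (1 / 2) * divg Y x * ‖gradient (w i) x‖ ^ 2))
      + (∑ i, m i * ∫ x in Ω, (⟪fderiv ℝ Y x (gradient (z i) x), gradient (z i) x⟫
        - (1 / 2) * divg Y x * ‖gradient (z i) x‖ ^ 2))
      + (∫ x in Ω, H ((WithLp.toLp 2 (fun j => w j x)), (WithLp.toLp 2 (fun j => z j x))) * divg Y x) = 0 := by
  classical
  have hKc : IsCompact (tsupport Y) := hYc
  set Aw : Fin k → EuclideanSpace ℝ (Fin N) → ℝ := fun i x =>
    ⟪fderiv ℝ Y x (gradient (w i) x), gradient (w i) x⟫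
      - (1 / 2) * divg Y x * ‖gradient (w i) x‖ ^ 2 with hAwdef
  set Az : Fin k → EuclideanSpace ℝ (Fin N) → ℝ := fun i x =>
    ⟪fderiv ℝ Y x (gradient (z i) x), gradient (z i) x⟫
      - (1 / 2) * divg Y x * ‖gradient (z i) x‖ ^ 2 with hAzdef
  set Cf : EuclideanSpace ℝ (Fin N) → ℝ := fun x =>
    H ((WithLp.toLp 2 (fun j => w j x)), (WithLp.toLp 2 (fun j => z j x))) * divg Y x with hCfdef
  set V : EuclideanSpace ℝ (Fin N) → EuclideanSpace ℝ (Fin N) := fun y =>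
    ((∑ i, l i • (⟪Y y, gradient (w i) y⟫ • gradient (w i) y
        - ((1/2) * ⟪gradient (w i) y, gradient (w i) y⟫) • Y y))
      + (∑ i, m i • (⟪Y y, gradient (z i) y⟫ • gradient (z i) y
        - ((1/2) * ⟪gradient (z i) y, gradient (z i) y⟫) • Y y)))
      + H ((WithLp.toLp 2 (fun j => w j y)), (WithLp.toLp 2 (fun j => z j y))) • Y y with hVdef
  -- V vanishes off the support of Y
  have hVzero : ∀ y, y ∉ tsupport Y → V y = 0 := by
    intro y hy
    have hy0 : Y y = 0 := image_eq_zero_of_notMem_tsupport hy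
    simp [hVdef, hy0]
  have hVc : HasCompactSupport V := HasCompactSupport.intro hKc hVzero
  -- V is C¹ on Ω
  have hVΩ : ContDiffOn ℝ 1 V Ω := by
    have hYco : ContDiffOn ℝ 1 Y Ω := hY.contDiffOn
    have hgwco : ∀ i, ContDiffOn ℝ 1 (fun y => gradient (w i) y) Ω := fun i =>
      gradient_contDiffOn hΩ (hw i)
    have hgzco : ∀ i, ContDiffOn ℝ 1 (fun y => gradient (z i) y) Ω := fun i =>
      gradient_contDiffOn hΩ (hz i)
    have htw : ∀ i, ContDiffOn ℝ 1 (fun y => ⟪Y y, gradient (w i) y⟫ • gradient (w i) y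
        - ((1/2) * ⟪gradient (w i) y, gradient (w i) y⟫) • Y y) Ω := fun i =>
      ((hYco.inner ℝ (hgwco i)).smul (hgwco i)).sub
        ((contDiffOn_const.mul ((hgwco i).inner ℝ (hgwco i))).smul hYco)
    have htz : ∀ i, ContDiffOn ℝ 1 (fun y => ⟪Y y, gradient (z i) y⟫ • gradient (z i) y
        - ((1/2) * ⟪gradient (z i) y, gradient (z i) y⟫) • Y y) Ω := fun i =>
      ((hYco.inner ℝ (hgzco i)).smul (hgzco i)).sub
        ((contDiffOn_const.mul ((hgzco i).inner ℝ (hgzco i))).smul hYco)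
    have hu1 : ContDiffOn ℝ 1
        (fun y => ((EuclideanSpace.equiv (Fin k) ℝ).symm fun j => w j y)) Ω := by
      apply (EuclideanSpace.equiv (Fin k) ℝ).symm.contDiff.comp_contDiffOn
      exact contDiffOn_pi.2 fun j => (hw j).of_le one_le_two
    have hu2 : ContDiffOn ℝ 1
        (fun y => ((EuclideanSpace.equiv (Fin k) ℝ).symm fun j => z j y)) Ω := by
      apply (EuclideanSpace.equiv (Fin k) ℝ).symm.contDiff.comp_contDiffOn
      exact contDiffOn_pi.2 fun j => (hz j).of_le one_le_two
    have hHuco : ContDiffOn ℝ 1 (fun y => H ((WithLp.toLp 2 (fun j => w j y)), (WithLp.toLp 2 (fun j => z j y)))) Ω :=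
      hH.comp_contDiffOn (hu1.prodMk hu2)
    rw [hVdef]
    exact ((ContDiffOn.sum fun i _ => (htw i).const_smul (l i)).add
      (ContDiffOn.sum fun i _ => (htz i).const_smul (m i))).add (hHuco.smul hYco)
  -- V is C¹ globally
  have hVC1 : ContDiff ℝ 1 V := by
    rw [contDiff_iff_contDiffAt]
    intro x
    by_cases hx : x ∈ Ω
    · exact hVΩ.contDiffAt (hΩ.mem_nhds hx)
    · have hxK : x ∉ tsupport Y := fun h => hx (hYs h)
      have hev : V =ᶠ[nhds x] (fun _ => 0) := by
        filter_upwards [((isClosed_tsupport Y).isOpen_compl).mem_nhds hxK] with y hy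
        exact hVzero y hy
      exact (contDiffAt_const (c := 0)).congr_of_eventuallyEq hev
  -- the divergence identity on Ω
  have hdiv : ∀ x ∈ Ω, divg V x
      = (∑ i, l i * Aw i x) + (∑ i, m i * Az i x) + Cf x := by
    intro x hx
    simp only [hVdef, hAwdef, hAzdef, hCfdef]
    have hYd : DifferentiableAt ℝ Y x := (hY.differentiable one_ne_zero) x
    have hgwd : ∀ i, DifferentiableAt ℝ (fun y => gradient (w i) y) x := fun i =>
      gradient_differentiableAt hΩ (hw i) hx
    have hgzd : ∀ i, DifferentiableAt ℝ (fun y => gradient (z i) y) x := fun i =>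
      gradient_differentiableAt hΩ (hz i) hx
    have hwd : ∀ j, DifferentiableAt ℝ (w j) x := fun j => f_differentiableAt hΩ (hw j) hx
    have hzd : ∀ j, DifferentiableAt ℝ (z j) x := fun j => f_differentiableAt hΩ (hz j) hx
    have htw : ∀ i, DifferentiableAt ℝ (fun y => ⟪Y y, gradient (w i) y⟫ • gradient (w i) y
        - ((1/2) * ⟪gradient (w i) y, gradient (w i) y⟫) • Y y) x := fun i =>
      ((hYd.inner ℝ (hgwd i)).smul (hgwd i)).sub
        ((((hgwd i).inner ℝ (hgwd i)).const_mul _).smul hYd)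
    have htz : ∀ i, DifferentiableAt ℝ (fun y => ⟪Y y, gradient (z i) y⟫ • gradient (z i) y
        - ((1/2) * ⟪gradient (z i) y, gradient (z i) y⟫) • Y y) x := fun i =>
      ((hYd.inner ℝ (hgzd i)).smul (hgzd i)).sub
        ((((hgzd i).inner ℝ (hgzd i)).const_mul _).smul hYd)
    have hHud : DifferentiableAt ℝ (fun y => H ((WithLp.toLp 2 (fun j => w j y)), (WithLp.toLp 2 (fun j => z j y)))) x := by
      have hu := ((pi_hasFDerivAt fun j => hwd j).prodMk
        (pi_hasFDerivAt fun j => hzd j)).differentiableAt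
      exact ((hH.differentiable one_ne_zero) _).comp x hu
    have hS1d : DifferentiableAt ℝ (fun y => ∑ i, l i • (⟪Y y, gradient (w i) y⟫ • gradient (w i) y
        - ((1/2) * ⟪gradient (w i) y, gradient (w i) y⟫) • Y y)) x :=
      DifferentiableAt.fun_sum fun i _ => (htw i).const_smul (l i)
    have hS2d : DifferentiableAt ℝ (fun y => ∑ i, m i • (⟪Y y, gradient (z i) y⟫ • gradient (z i) y
        - ((1/2) * ⟪gradient (z i) y, gradient (z i) y⟫) • Y y)) x :=
      DifferentiableAt.fun_sum fun i _ => (htz i).const_smul (m i)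
    rw [divg_add (hS1d.fun_add hS2d) (hHud.fun_smul hYd), divg_add hS1d hS2d]
    have hS1 : divg (fun y => ∑ i, l i • (⟪Y y, gradient (w i) y⟫ • gradient (w i) y
        - ((1/2) * ⟪gradient (w i) y, gradient (w i) y⟫) • Y y)) x
        = ∑ i, l i * ((⟪fderiv ℝ Y x (gradient (w i) x), gradient (w i) x⟫
            - (1/2) * divg Y x * ‖gradient (w i) x‖^2)
          + ⟪Y x, gradient (w i) x⟫ * lap (w i) x) := by
      rw [divg_fun_sum (Z := fun i y => l i • (⟪Y y, gradient (w i) y⟫ • gradient (w i) y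
          - ((1/2) * ⟪gradient (w i) y, gradient (w i) y⟫) • Y y)) Finset.univ
        (fun i _ => (htw i).const_smul (l i))]
      refine Finset.sum_congr rfl fun i _ => ?_
      rw [divg_const_smul (htw i) (l i), divg_term_eq hΩ (hw i) hx hY]
    have hS2 : divg (fun y => ∑ i, m i • (⟪Y y, gradient (z i) y⟫ • gradient (z i) y
        - ((1/2) * ⟪gradient (z i) y, gradient (z i) y⟫) • Y y)) x
        = ∑ i, m i * ((⟪fderiv ℝ Y x (gradient (z i) x), gradient (z i) x⟫
            - (1/2) * divg Y x * ‖gradient (z i) x‖^2)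
          + ⟪Y x, gradient (z i) x⟫ * lap (z i) x) := by
      rw [divg_fun_sum (Z := fun i y => m i • (⟪Y y, gradient (z i) y⟫ • gradient (z i) y
          - ((1/2) * ⟪gradient (z i) y, gradient (z i) y⟫) • Y y)) Finset.univ
        (fun i _ => (htz i).const_smul (m i))]
      refine Finset.sum_congr rfl fun i _ => ?_
      rw [divg_const_smul (htz i) (m i), divg_term_eq hΩ (hz i) hx hY]
    have hS3 : divg (fun y => H ((WithLp.toLp 2 (fun j => w j y)), (WithLp.toLp 2 (fun j => z j y))) • Y y) x
        = ((∑ j, ⟪gradient (w j) x, Y x⟫ * (-(l j) * lap (w j) x))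
          + (∑ j, ⟪gradient (z j) x, Y x⟫ * (-(m j) * lap (z j) x)))
          + H ((WithLp.toLp 2 (fun j => w j x)), (WithLp.toLp 2 (fun j => z j x))) * divg Y x := by
      rw [divg_smul hHud hYd]
      congr 1
      rw [comp_H_fderiv_apply hH hwd hzd (Y x)]
      congr 1
      · refine Finset.sum_congr rfl fun j _ => ?_
        rw [← hpde1 j x hx, ← inner_gradient]
      · refine Finset.sum_congr rfl fun j _ => ?_
        rw [← hpde2 j x hx, ← inner_gradient]
    rw [hS1, hS2, hS3]
    simp only [mul_add, Finset.sum_add_distrib]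
    have e1 : ∑ j, ⟪gradient (w j) x, Y x⟫ * (-(l j) * lap (w j) x)
        = -∑ i, l i * (⟪Y x, gradient (w i) x⟫ * lap (w i) x) := by
      rw [← Finset.sum_neg_distrib]
      refine Finset.sum_congr rfl fun j _ => ?_
      rw [real_inner_comm]
      ring
    have e2 : ∑ j, ⟪gradient (z j) x, Y x⟫ * (-(m j) * lap (z j) x)
        = -∑ i, m i * (⟪Y x, gradient (z i) x⟫ * lap (z i) x) := by
      rw [← Finset.sum_neg_distrib]
      refine Finset.sum_congr rfl fun j _ => ?_
      rw [real_inner_comm]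
      ring
    rw [e1, e2]
    ring
  -- divergence vanishes off Ω
  have hdiv0 : ∀ x, x ∉ Ω → divg V x = 0 := by
    intro x hx
    have hxK : x ∉ tsupport Y := fun h => hx (hYs h)
    apply divg_eq_zero_of_eventually_zero
    filter_upwards [((isClosed_tsupport Y).isOpen_compl).mem_nhds hxK] with y hy
    exact hVzero y hy
  -- continuity of divg Y
  have hdY : Continuous fun x => divg Y x := by
    unfold divg
    exact continuous_finset_sum _ fun i _ => fderiv_apply_continuous (comp_proj_c1 hY i) _
  have hdY0 : ∀ x, x ∉ tsupport Y → divg Y x = 0 := fun x hx =>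
    divg_eq_zero_of_eventually_zero (not_mem_tsupport_eventually_zero hx)
  have hfY0 : ∀ x, x ∉ tsupport Y → fderiv ℝ Y x = 0 := fun x hx =>
    fderiv_eq_zero_of_eventually_zero (not_mem_tsupport_eventually_zero hx)
  -- integrability
  have hgwc : ∀ i, ContinuousOn (fun x => gradient (w i) x) Ω := fun i =>
    (gradient_contDiffOn hΩ (hw i)).continuousOn
  have hgzc : ∀ i, ContinuousOn (fun x => gradient (z i) x) Ω := fun i =>
    (gradient_contDiffOn hΩ (hz i)).continuousOn
  have hIA : ∀ i, IntegrableOn (Aw i) Ω := by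
    intro i
    apply integrableOn_of_supp hΩ hKc hYs
    · apply ContinuousOn.sub
      · exact ContinuousOn.inner
          (((hY.continuous_fderiv one_ne_zero).continuousOn).clm_apply (hgwc i)) (hgwc i)
      · exact (continuous_const.mul hdY).continuousOn.mul (((hgwc i).norm).pow 2)
    · intro x hx
      simp [hAwdef, hfY0 x hx.2, hdY0 x hx.2]
  have hIB : ∀ i, IntegrableOn (Az i) Ω := by
    intro i
    apply integrableOn_of_supp hΩ hKc hYs
    · apply ContinuousOn.sub
      · exact ContinuousOn.inner
          (((hY.continuous_fderiv one_ne_zero).continuousOn).clm_apply (hgzc i)) (hgzc i)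
      · exact (continuous_const.mul hdY).continuousOn.mul (((hgzc i).norm).pow 2)
    · intro x hx
      simp [hAzdef, hfY0 x hx.2, hdY0 x hx.2]
  have hHuc : ContinuousOn (fun y => H ((WithLp.toLp 2 (fun j => w j y)), (WithLp.toLp 2 (fun j => z j y)))) Ω := by
    apply hH.continuous.comp_continuousOn
    apply ContinuousOn.prodMk
    · exact (PiLp.continuous_toLp 2 _).comp_continuousOn (continuousOn_pi.2 fun j => ((hw j).continuousOn.mono (by rfl)))
    · exact (PiLp.continuous_toLp 2 _).comp_continuousOn (continuousOn_pi.2 fun j => ((hz j).continuousOn.mono (by rfl)))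
  have hIC : IntegrableOn Cf Ω := by
    apply integrableOn_of_supp hΩ hKc hYs
    · exact hHuc.mul hdY.continuousOn
    · intro x hx
      simp [hCfdef, hdY0 x hx.2]
  -- assemble
  show (∑ i, l i * ∫ x in Ω, Aw i x) + (∑ i, m i * ∫ x in Ω, Az i x)
      + (∫ x in Ω, Cf x) = 0
  have step1 : (∑ i, l i * ∫ x in Ω, Aw i x) = ∫ x in Ω, ∑ i, l i * Aw i x :=
    calc (∑ i, l i * ∫ x in Ω, Aw i x) = ∑ i, ∫ x in Ω, l i * Aw i x :=
          Finset.sum_congr rfl fun i _ => (integral_const_mul _ _).symm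
      _ = ∫ x in Ω, ∑ i, l i * Aw i x :=
          (integral_finset_sum _ fun i _ => (hIA i).const_mul (l i)).symm
  have step2 : (∑ i, m i * ∫ x in Ω, Az i x) = ∫ x in Ω, ∑ i, m i * Az i x :=
    calc (∑ i, m i * ∫ x in Ω, Az i x) = ∑ i, ∫ x in Ω, m i * Az i x :=
          Finset.sum_congr rfl fun i _ => (integral_const_mul _ _).symm
      _ = ∫ x in Ω, ∑ i, m i * Az i x :=
          (integral_finset_sum _ fun i _ => (hIB i).const_mul (m i)).symm
  rw [step1, step2]
  have hI1 : IntegrableOn (fun x => ∑ i, l i * Aw i x) Ω :=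
    integrable_finset_sum _ fun i _ => (hIA i).const_mul (l i)
  have hI2 : IntegrableOn (fun x => ∑ i, m i * Az i x) Ω :=
    integrable_finset_sum _ fun i _ => (hIB i).const_mul (m i)
  have e12 : (∫ x in Ω, ((∑ i, l i * Aw i x) + (∑ i, m i * Az i x)))
      = (∫ x in Ω, ∑ i, l i * Aw i x) + (∫ x in Ω, ∑ i, m i * Az i x) :=
    integral_add hI1 hI2
  have e123 : (∫ x in Ω, ((∑ i, l i * Aw i x) + (∑ i, m i * Az i x) + Cf x))
      = (∫ x in Ω, ((∑ i, l i * Aw i x) + (∑ i, m i * Az i x))) + ∫ x in Ω, Cf x :=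
    integral_add (hI1.add hI2) hIC
  rw [← e12, ← e123]
  have step4 : (∫ x in Ω, ((∑ i, l i * Aw i x) + (∑ i, m i * Az i x) + Cf x))
      = ∫ x in Ω, divg V x :=
    setIntegral_congr_fun hΩ.measurableSet fun x hx => (hdiv x hx).symm
  rw [step4, setIntegral_eq_integral_of_forall_compl_eq_zero hdiv0]
  exact integral_divg_eq_zero hVC1 hVc
end

section
/- Let N ∈ ℕ with N ≥ 2 and a > 0. Then there exist constants C > 0 and ε̄ > 0 such that for every 0 < ε < ε̄, every unit vector ν ∈ ℝᴺ, and every function w that is continuous and nonnegative on the closed unit ball of ℝᴺ, C² on the open unit ball B₁(0), satisfies −Δw ≤ a·w pointwise on B₁(0), and vanishes identically on { x ∈ B₁(0) : |x·ν| > ε }, one has sup_{B_{1/2}(0)} w ≤ e^{−C/ε} · sup_{B₁(0)} w. -/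
open MeasureTheory Metric
open scoped RealInnerProductSpace

section helpers

lemma sd_test {g : ℝ → ℝ} {U : Set ℝ} (hU : IsOpen U) (h0 : (0:ℝ) ∈ U)
    (hg : ContDiffOn ℝ 2 g U) (hmax : IsLocalMax g 0) : deriv (deriv g) 0 ≤ 0 := by
  by_contra hc
  push_neg at hc
  have hd1 : ContDiffOn ℝ 1 (deriv g) U := hg.deriv_of_isOpen hU (by norm_num)
  have hdiff : DifferentiableAt ℝ (deriv g) 0 :=
    ((hd1.differentiableOn (by norm_num)) 0 h0).differentiableAt (hU.mem_nhds h0)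
  have hder : HasDerivAt (deriv g) (deriv (deriv g) 0) 0 := hdiff.hasDerivAt
  have h0' : deriv g 0 = 0 := hmax.deriv_eq_zero
  have hslope : Filter.Tendsto (slope (deriv g) 0) (nhdsWithin 0 {(0:ℝ)}ᶜ)
      (nhds (deriv (deriv g) 0)) := hasDerivAt_iff_tendsto_slope.1 hder
  have hev : ∀ᶠ s in nhdsWithin 0 {(0:ℝ)}ᶜ, 0 < slope (deriv g) 0 s :=
    hslope.eventually (eventually_gt_nhds hc)
  obtain ⟨δ1, hδ1, hδ1'⟩ := Metric.mem_nhdsWithin_iff.1 hev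
  obtain ⟨δ2, hδ2, hδ2'⟩ := Metric.eventually_nhds_iff.1 hmax
  obtain ⟨δ3, hδ3, hδ3'⟩ := Metric.isOpen_iff.1 hU 0 h0
  set δ := min δ1 (min δ2 δ3) with hδdef
  have hδ : 0 < δ := lt_min hδ1 (lt_min hδ2 hδ3)
  have hδle1 : δ ≤ δ1 := min_le_left _ _
  have hδle2 : δ ≤ δ2 := le_trans (min_le_right _ _) (min_le_left _ _)
  have hδle3 : δ ≤ δ3 := le_trans (min_le_right _ _) (min_le_right _ _)
  have hsub : Set.Icc (0:ℝ) (δ/2) ⊆ U := by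
    intro s hs
    apply hδ3'
    simp only [Metric.mem_ball, Real.dist_eq, sub_zero]
    rw [abs_of_nonneg hs.1]
    calc s ≤ δ/2 := hs.2
    _ < δ := by linarith
    _ ≤ δ3 := hδle3
  have hpos : ∀ s ∈ interior (Set.Icc (0:ℝ) (δ/2)), 0 < deriv g s := by
    rw [interior_Icc]
    intro s hs
    have hne : s ∈ ({(0:ℝ)}ᶜ : Set ℝ) := by simp [ne_of_gt hs.1]
    have hds : s ∈ Metric.ball (0:ℝ) δ1 := by
      simp only [Metric.mem_ball, Real.dist_eq, sub_zero]
      rw [abs_of_pos hs.1]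
      calc s < δ/2 := hs.2
      _ < δ := by linarith
      _ ≤ δ1 := hδle1
    have hsl : 0 < slope (deriv g) 0 s := hδ1' ⟨hds, hne⟩
    rw [slope_def_field, h0', sub_zero, sub_zero] at hsl
    have := mul_pos hsl hs.1
    rwa [div_mul_cancel₀ _ (ne_of_gt hs.1)] at this
  have hcont : ContinuousOn g (Set.Icc (0:ℝ) (δ/2)) :=
    (hg.continuousOn).mono hsub
  have hmono : StrictMonoOn g (Set.Icc (0:ℝ) (δ/2)) :=
    strictMonoOn_of_deriv_pos (convex_Icc _ _) hcont hpos
  have h1 : g 0 < g (δ/2) := hmono ⟨le_refl _, by linarith⟩ ⟨by linarith, le_refl _⟩ (by linarith)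
  have h2 : g (δ/2) ≤ g 0 := by
    apply hδ2'
    rw [Real.dist_eq, sub_zero, abs_of_pos (by linarith : (0:ℝ) < δ/2)]
    linarith
  linarith

lemma line_lap {E : Type*} [NormedAddCommGroup E] [NormedSpace ℝ E]
    {f : E → ℝ} {V : Set E} (hV : IsOpen V) (hf : ContDiffOn ℝ 2 f V)
    {x₀ : E} (hx : x₀ ∈ V) (e : E) :
    fderiv ℝ (fun y => fderiv ℝ f y e) x₀ e
      = deriv (deriv (fun s : ℝ => f (x₀ + s • e))) 0 := by
  set L : ℝ → E := fun s => x₀ + s • e with hLdef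
  have hL : ∀ s : ℝ, HasDerivAt L e s := by
    intro s
    have h1 : HasDerivAt (fun s : ℝ => s • e) ((1:ℝ) • e) s := (hasDerivAt_id s).smul_const e
    simpa [hLdef] using h1.const_add x₀
  have hL0 : L 0 = x₀ := by simp [hLdef]
  have hW : IsOpen (L ⁻¹' V) := hV.preimage (by fun_prop)
  have h0W : (0:ℝ) ∈ L ⁻¹' V := by simp [Set.mem_preimage, hL0, hx]
  -- first derivative of f ∘ L on W
  have step1 : ∀ s ∈ L ⁻¹' V, HasDerivAt (fun u => f (L u)) (fderiv ℝ f (L s) e) s := by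
    intro s hs
    have hdf : DifferentiableAt ℝ f (L s) :=
      (hf.contDiffAt (hV.mem_nhds hs)).differentiableAt two_ne_zero
    exact hdf.hasFDerivAt.comp_hasDerivAt s (hL s)
  have step2 : Set.EqOn (deriv (fun u => f (L u))) (fun s => fderiv ℝ f (L s) e) (L ⁻¹' V) :=
    fun s hs => (step1 s hs).deriv
  -- fderiv f is C¹ on V
  have hfd : ContDiffOn ℝ 1 (fderiv ℝ f) V := hf.fderiv_of_isOpen hV le_rfl
  have hD : HasFDerivAt (fderiv ℝ f) (fderiv ℝ (fderiv ℝ f) x₀) x₀ :=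
    (((hfd.differentiableOn one_ne_zero) x₀ hx).differentiableAt (hV.mem_nhds hx)).hasFDerivAt
  have hD0 : HasFDerivAt (fderiv ℝ f) (fderiv ℝ (fderiv ℝ f) x₀) (L 0) := hL0 ▸ hD
  have hΦ : HasDerivAt (fun s => fderiv ℝ f (L s) e)
      ((fderiv ℝ (fderiv ℝ f) x₀ e) e) 0 := by
    have h1 : HasDerivAt (fun s => fderiv ℝ f (L s)) (fderiv ℝ (fderiv ℝ f) x₀ e) 0 :=
      hD0.comp_hasDerivAt 0 (hL 0)
    have h2 := (ContinuousLinearMap.apply ℝ ℝ e).hasFDerivAt.comp_hasDerivAt 0 h1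
    exact h2
  have hRHS : deriv (deriv (fun s : ℝ => f (x₀ + s • e))) 0
      = (fderiv ℝ (fderiv ℝ f) x₀ e) e := by
    have hev : deriv (fun u => f (L u)) =ᶠ[nhds 0] (fun s => fderiv ℝ f (L s) e) :=
      Filter.eventuallyEq_of_mem (hW.mem_nhds h0W) step2
    calc deriv (deriv (fun s : ℝ => f (x₀ + s • e))) 0
        = deriv (fun s => fderiv ℝ f (L s) e) 0 := hev.deriv_eq
      _ = (fderiv ℝ (fderiv ℝ f) x₀ e) e := hΦ.deriv
  have hLHS : HasFDerivAt (fun y => fderiv ℝ f y e)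
      ((ContinuousLinearMap.apply ℝ ℝ e).comp (fderiv ℝ (fderiv ℝ f) x₀)) x₀ :=
    (ContinuousLinearMap.apply ℝ ℝ e).hasFDerivAt.comp x₀ hD
  rw [hRHS, hLHS.fderiv]
  simp

lemma deriv2_sub {p q : ℝ → ℝ} {W : Set ℝ} (hW : IsOpen W) (h0 : (0:ℝ) ∈ W)
    (hp : ContDiffOn ℝ 2 p W) (hq : ContDiff ℝ 2 q) (c : ℝ) :
    deriv (deriv (fun s => p s - c * q s)) 0
      = deriv (deriv p) 0 - c * deriv (deriv q) 0 := by
  have hpd : ∀ s ∈ W, DifferentiableAt ℝ p s := fun s hs =>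
    ((hp.differentiableOn two_ne_zero) s hs).differentiableAt (hW.mem_nhds hs)
  have hqd : ∀ s : ℝ, DifferentiableAt ℝ q s := fun s =>
    (hq.differentiable two_ne_zero) s
  have step1 : Set.EqOn (deriv (fun s => p s - c * q s))
      (fun s => deriv p s - c * deriv q s) W := by
    intro s hs
    rw [deriv_fun_sub (hpd s hs) ((hqd s).const_mul c), deriv_const_mul c (hqd s)]
  have hev : deriv (fun s => p s - c * q s) =ᶠ[nhds 0]
      (fun s => deriv p s - c * deriv q s) :=
    Filter.eventuallyEq_of_mem (hW.mem_nhds h0) step1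
  rw [hev.deriv_eq]
  have hpd1 : ContDiffOn ℝ 1 (deriv p) W := hp.deriv_of_isOpen hW (by norm_num)
  have hpd1' : DifferentiableAt ℝ (deriv p) 0 :=
    ((hpd1.differentiableOn one_ne_zero) 0 h0).differentiableAt (hW.mem_nhds h0)
  have hqd1' : DifferentiableAt ℝ (deriv q) 0 := by
    have : ContDiff ℝ 1 (deriv q) := (contDiff_succ_iff_deriv.1 hq).2.2
    exact (this.differentiable one_ne_zero) 0
  rw [deriv_fun_sub hpd1' (hqd1'.const_mul c), deriv_const_mul c hqd1']

lemma deriv2_cos_exp (A B C D m : ℝ) :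
    deriv (deriv (fun s : ℝ => Real.cos (A + B*s) * Real.exp (C + D*s + m*s^2))) 0
      = (-(B^2) * Real.cos A - 2*B*D*Real.sin A + (D^2 + 2*m) * Real.cos A) * Real.exp C := by
  have haff : ∀ (u v s : ℝ), HasDerivAt (fun s : ℝ => u + v*s) v s := by
    intro u v s
    simpa using ((hasDerivAt_id s).const_mul v).const_add u
  have hquad : ∀ s : ℝ, HasDerivAt (fun s : ℝ => C + D*s + m*s^2) (D + 2*m*s) s := by
    intro s
    have h1 : HasDerivAt (fun s : ℝ => C + D*s) D s := haff C D s
    have h2 : HasDerivAt (fun s : ℝ => m*s^2) (m*(2*s)) s := by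
      simpa using (hasDerivAt_pow 2 s).const_mul m
    have := h1.add h2
    simp only [Pi.add_def] at this
    exact this.congr_deriv (by ring)
  have hexp : ∀ s : ℝ, HasDerivAt (fun s : ℝ => Real.exp (C + D*s + m*s^2))
      (Real.exp (C + D*s + m*s^2) * (D + 2*m*s)) s := by
    intro s
    exact (Real.hasDerivAt_exp _).comp s (hquad s)
  have hcos : ∀ s : ℝ, HasDerivAt (fun s : ℝ => Real.cos (A + B*s))
      (-Real.sin (A + B*s) * B) s := by
    intro s
    exact (Real.hasDerivAt_cos _).comp s (haff A B s)
  have key : ∀ s : ℝ, HasDerivAt (fun s : ℝ => Real.cos (A + B*s) * Real.exp (C + D*s + m*s^2))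
      ((-(B * Real.sin (A + B*s)) + Real.cos (A + B*s) * (D + 2*m*s)) * Real.exp (C + D*s + m*s^2)) s := by
    intro s
    have := (hcos s).mul (hexp s)
    simp only [Pi.mul_def] at this
    exact this.congr_deriv (by ring)
  have hd1 : deriv (fun s : ℝ => Real.cos (A + B*s) * Real.exp (C + D*s + m*s^2))
      = fun s => (-(B * Real.sin (A + B*s)) + Real.cos (A + B*s) * (D + 2*m*s)) * Real.exp (C + D*s + m*s^2) :=
    funext fun s => (key s).deriv
  rw [hd1]
  -- second derivative at 0
  have hsin : HasDerivAt (fun s : ℝ => Real.sin (A + B*s)) (Real.cos (A + B*0) * B) 0 :=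
    (Real.hasDerivAt_sin _).comp 0 (haff A B 0)
  have hu : HasDerivAt (fun s : ℝ => -(B * Real.sin (A + B*s)) + Real.cos (A + B*s) * (D + 2*m*s))
      (-(B * (Real.cos (A + B*0) * B)) + ((-Real.sin (A + B*0) * B) * (D + 2*m*0) + Real.cos (A + B*0) * (2*m))) 0 := by
    have h1 : HasDerivAt (fun s : ℝ => -(B * Real.sin (A + B*s))) (-(B * (Real.cos (A + B*0) * B))) 0 :=
      ((hsin.const_mul B)).neg
    have h2 : HasDerivAt (fun s : ℝ => Real.cos (A + B*s) * (D + 2*m*s))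
        ((-Real.sin (A + B*0) * B) * (D + 2*m*0) + Real.cos (A + B*0) * (2*m)) 0 := by
      have := (hcos 0).mul (haff D (2*m) 0)
      simp only [Pi.mul_def] at this
      convert this using 1
    exact h1.add h2
  have := hu.mul (hexp 0)
  simp only [Pi.mul_def] at this
  rw [this.deriv]
  simp only [mul_zero, add_zero, zero_pow, pow_two]
  norm_num
  ring

lemma contDiff_v {N : ℕ} (l m : ℝ) (ν : EuclideanSpace ℝ (Fin N)) :
    ContDiff ℝ 2 (fun y : EuclideanSpace ℝ (Fin N) =>
      Real.cos (l * ⟪y, ν⟫) * Real.exp (m * ⟪y, y⟫)) := by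
  have h1 : ContDiff ℝ 2 (fun y : EuclideanSpace ℝ (Fin N) => ⟪y, ν⟫) :=
    ContDiff.inner (𝕜 := ℝ) contDiff_id contDiff_const
  have h2 : ContDiff ℝ 2 (fun y : EuclideanSpace ℝ (Fin N) => ⟪y, y⟫) :=
    ContDiff.inner (𝕜 := ℝ) contDiff_id contDiff_id
  exact (Real.contDiff_cos.comp (contDiff_const.mul h1)).mul
    (Real.contDiff_exp.comp (contDiff_const.mul h2))

lemma lap_v {N : ℕ} (l m : ℝ) (ν x : EuclideanSpace ℝ (Fin N)) :
    lap (fun y => Real.cos (l * ⟪y, ν⟫) * Real.exp (m * ⟪y, y⟫)) x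
      = Real.exp (m * ⟪x, x⟫) *
        ((4*m^2*⟪x, x⟫ + 2*m*N - l^2*⟪ν, ν⟫) * Real.cos (l * ⟪x, ν⟫)
          - 4*l*m*⟪x, ν⟫ * Real.sin (l * ⟪x, ν⟫)) := by
  have hsm := contDiff_v (N := N) l m ν
  unfold lap
  have hstep : ∀ i : Fin N,
      (fderiv ℝ (fun y => fderiv ℝ (fun y => Real.cos (l * ⟪y, ν⟫) * Real.exp (m * ⟪y, y⟫)) y
        (EuclideanSpace.single i 1)) x) (EuclideanSpace.single i 1)
      = (-( (l * ν i)^2) * Real.cos (l*⟪x,ν⟫) - 2*(l*ν i)*(2*m*x i)*Real.sin (l*⟪x,ν⟫)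
          + ((2*m*x i)^2 + 2*m) * Real.cos (l*⟪x,ν⟫)) * Real.exp (m*⟪x,x⟫) := by
    intro i
    rw [line_lap isOpen_univ hsm.contDiffOn (Set.mem_univ x) (EuclideanSpace.single i 1)]
    have hfun : (fun s : ℝ => Real.cos (l * ⟪x + s • EuclideanSpace.single i (1:ℝ), ν⟫)
        * Real.exp (m * ⟪x + s • EuclideanSpace.single i (1:ℝ), x + s • EuclideanSpace.single i (1:ℝ)⟫))
        = fun s => Real.cos ((l*⟪x,ν⟫) + (l * ν i)*s)
            * Real.exp ((m*⟪x,x⟫) + (2*m*x i)*s + m*s^2) := by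
      funext s
      have e1 : ⟪EuclideanSpace.single i (1:ℝ), ν⟫ = ν i := by
        rw [EuclideanSpace.inner_single_left]; simp
      have e2 : ⟪x, EuclideanSpace.single i (1:ℝ)⟫ = x i := by
        rw [EuclideanSpace.inner_single_right]; simp
      have e3 : ⟪EuclideanSpace.single i (1:ℝ), EuclideanSpace.single i (1:ℝ)⟫ = (1:ℝ) := by
        rw [EuclideanSpace.inner_single_left]; simp
      have h1 : l * ⟪x + s • EuclideanSpace.single i (1:ℝ), ν⟫ = (l*⟪x,ν⟫) + (l * ν i)*s := by
        rw [inner_add_left, real_inner_smul_left, e1]; ring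
      have h2 : m * ⟪x + s • EuclideanSpace.single i (1:ℝ), x + s • EuclideanSpace.single i (1:ℝ)⟫
          = (m*⟪x,x⟫) + (2*m*x i)*s + m*s^2 := by
        rw [real_inner_add_add_self, real_inner_smul_right, real_inner_smul_left,
          real_inner_smul_right, e2, e3]
        ring
      rw [h1, h2]
    rw [hfun, deriv2_cos_exp]
  rw [Finset.sum_congr rfl (fun i _ => hstep i)]
  have hT : ⟪x, ν⟫ = ∑ i, x i * ν i := by
    rw [PiLp.inner_apply]; simp [RCLike.inner_apply]; exact Finset.sum_congr rfl (fun i _ => by ring)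
  have hR : ⟪x, x⟫ = ∑ i, x i * x i := by
    rw [PiLp.inner_apply]; simp [RCLike.inner_apply]; exact Finset.sum_congr rfl (fun i _ => by ring)
  have hV : ⟪ν, ν⟫ = ∑ i, ν i * ν i := by
    rw [PiLp.inner_apply]; simp [RCLike.inner_apply]; exact Finset.sum_congr rfl (fun i _ => by ring)
  have expand : ∀ i : Fin N,
      (-( (l * ν i)^2) * Real.cos (l*⟪x,ν⟫) - 2*(l*ν i)*(2*m*x i)*Real.sin (l*⟪x,ν⟫)
          + ((2*m*x i)^2 + 2*m) * Real.cos (l*⟪x,ν⟫)) * Real.exp (m*⟪x,x⟫)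
      = (-(l^2) * Real.cos (l*⟪x,ν⟫) * Real.exp (m*⟪x,x⟫)) * (ν i * ν i)
        + (-(4*l*m) * Real.sin (l*⟪x,ν⟫) * Real.exp (m*⟪x,x⟫)) * (x i * ν i)
        + (4*m^2 * Real.cos (l*⟪x,ν⟫) * Real.exp (m*⟪x,x⟫)) * (x i * x i)
        + 2*m*Real.cos (l*⟪x,ν⟫) * Real.exp (m*⟪x,x⟫) := by
    intro i; ring
  rw [Finset.sum_congr rfl (fun i _ => expand i)]
  simp only [Finset.sum_add_distrib, ← Finset.mul_sum, Finset.sum_const, Finset.card_univ,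
    Fintype.card_fin, nsmul_eq_mul]
  rw [← hT, ← hR, ← hV]
  ring

end helpers

set_option maxHeartbeats 2000000 in
/-- exponential decay estimate for nonnegative subsolutions of
`−Δw ≤ a w` on the unit ball that vanish outside the strip `{|x·ν| ≤ ε}`. -/
theorem stmt7 (N : ℕ) (hN : 2 ≤ N) (a : ℝ) (ha : 0 < a) :
    ∃ C > (0 : ℝ), ∃ ε' > (0 : ℝ), ∀ ε : ℝ, 0 < ε → ε < ε' →
      ∀ ν : EuclideanSpace ℝ (Fin N), ‖ν‖ = 1 →
      ∀ w : EuclideanSpace ℝ (Fin N) → ℝ,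
        ContinuousOn w (Metric.closedBall 0 1) →
        (∀ x ∈ Metric.closedBall (0 : EuclideanSpace ℝ (Fin N)) 1, 0 ≤ w x) →
        ContDiffOn ℝ 2 w (Metric.ball 0 1) →
        (∀ x ∈ Metric.ball (0 : EuclideanSpace ℝ (Fin N)) 1, -lap w x ≤ a * w x) →
        (∀ x ∈ Metric.ball (0 : EuclideanSpace ℝ (Fin N)) 1, ε < |⟪x, ν⟫| → w x = 0) →
        sSup (w '' Metric.ball 0 (1 / 2)) ≤ Real.exp (-C / ε) * sSup (w '' Metric.ball 0 1) := by
  have hπ := Real.pi_pos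
  have hN2 : (2:ℝ) ≤ (N:ℝ) := by exact_mod_cast hN
  have hNpos : (0:ℝ) < N := by linarith
  have hlog2 : 0 < Real.log 2 := Real.log_pos (by norm_num)
  have hsq : 0 < Real.sqrt (24*(a+1)) := Real.sqrt_pos.2 (by linarith)
  refine ⟨Real.pi/32, by positivity, min (min (Real.pi/(4*N)) (Real.pi / Real.sqrt (24*(a+1)))) (Real.pi/(32*Real.log 2)), by positivity, ?_⟩
  intro ε hε hεlt ν hν w hwc hw0 hw2 hsubsol hvan
  have hε1 : ε ≤ Real.pi/(4*N) :=
    le_trans hεlt.le (le_trans (min_le_left _ _) (min_le_left _ _))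
  have hε2 : ε ≤ Real.pi / Real.sqrt (24*(a+1)) :=
    le_trans hεlt.le (le_trans (min_le_left _ _) (min_le_right _ _))
  have hε3 : ε ≤ Real.pi/(32*Real.log 2) := le_trans hεlt.le (min_le_right _ _)
  set m : ℝ := Real.pi/(12*ε) with hmdef
  set l : ℝ := Real.pi/(3*ε) with hldef
  have hm : 0 < m := by positivity
  have hl : 0 < l := by positivity
  have hl4 : l = 4*m := by rw [hldef, hmdef]; field_simp; ring
  have hlε : l * ε = Real.pi/3 := by rw [hldef]; field_simp
  set v : EuclideanSpace ℝ (Fin N) → ℝ :=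
    fun y => Real.cos (l * ⟪y, ν⟫) * Real.exp (m * ⟪y, y⟫) with hvdef
  have hsmv : ContDiff ℝ 2 v := contDiff_v l m ν
  have hRx : ∀ x : EuclideanSpace ℝ (Fin N), ⟪x, x⟫ = ‖x‖^2 := fun x =>
    real_inner_self_eq_norm_sq x
  have hTx : ∀ x : EuclideanSpace ℝ (Fin N), |⟪x, ν⟫| ≤ ‖x‖ := by
    intro x
    have := abs_real_inner_le_norm x ν
    rwa [hν, mul_one] at this
  have hνν : ⟪ν, ν⟫ = (1:ℝ) := by rw [hRx, hν]; norm_num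
  -- cosine bounds
  have hcos_half : ∀ θ : ℝ, |θ| ≤ ε → 1/2 ≤ Real.cos (l*θ) := by
    intro θ hθ
    have h1 : |l*θ| ≤ Real.pi/3 := by
      rw [abs_mul, abs_of_pos hl]
      calc l * |θ| ≤ l * ε := by nlinarith
      _ = Real.pi/3 := hlε
    have h2 : Real.cos (Real.pi/3) ≤ Real.cos |l*θ| := by
      apply Real.cos_le_cos_of_nonneg_of_le_pi (abs_nonneg _) (by linarith [Real.pi_pos]) h1
    rwa [Real.cos_abs, Real.cos_pi_div_three] at h2
  have habs_pi2 : ∀ θ : ℝ, |θ| ≤ 3/2*ε → |l*θ| ≤ Real.pi/2 := by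
    intro θ hθ
    rw [abs_mul, abs_of_pos hl]
    calc l * |θ| ≤ l * (3/2*ε) := by nlinarith
    _ = 3/2 * (l*ε) := by ring
    _ = Real.pi/2 := by rw [hlε]; ring
  have hcos_nonneg : ∀ θ : ℝ, |θ| ≤ 3/2*ε → 0 ≤ Real.cos (l*θ) := by
    intro θ hθ
    have := abs_le.1 (habs_pi2 θ hθ)
    apply Real.cos_nonneg_of_mem_Icc
    constructor <;> [linarith [this.1]; linarith [this.2]]
  have htsin : ∀ θ : ℝ, |θ| ≤ 3/2*ε → 0 ≤ θ * Real.sin (l*θ) := by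
    intro θ hθ
    have habs := abs_le.1 (habs_pi2 θ hθ)
    rcases le_or_gt 0 θ with h | h
    · have : 0 ≤ Real.sin (l*θ) := by
        apply Real.sin_nonneg_of_nonneg_of_le_pi (by positivity)
        linarith [habs.2]
      positivity
    · have h1 : Real.sin (l*θ) ≤ 0 := by
        have h2 : 0 ≤ Real.sin (-(l*θ)) := by
          apply Real.sin_nonneg_of_nonneg_of_le_pi (by nlinarith)
          linarith [habs.1]
        rw [Real.sin_neg] at h2; linarith
      nlinarith
  have hv_lb : ∀ x : EuclideanSpace ℝ (Fin N), |⟪x, ν⟫| ≤ ε →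
      (1/2) * Real.exp (m*⟪x,x⟫) ≤ v x := by
    intro x hx
    have := hcos_half _ hx
    have he : (0:ℝ) < Real.exp (m*⟪x,x⟫) := Real.exp_pos _
    rw [hvdef]
    simp only
    nlinarith
  have hv_pos : ∀ x : EuclideanSpace ℝ (Fin N), |⟪x, ν⟫| ≤ ε → 0 < v x := by
    intro x hx
    have := hv_lb x hx
    have he : (0:ℝ) < Real.exp (m*⟪x,x⟫) := Real.exp_pos _
    linarith
  -- sup over the unit ball
  set M : ℝ := sSup (w '' Metric.ball 0 1) with hMdef
  have hcompact : IsCompact (Metric.closedBall (0:EuclideanSpace ℝ (Fin N)) 1) :=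
    isCompact_closedBall 0 1
  have hbdd : BddAbove (w '' Metric.ball 0 1) := by
    apply BddAbove.mono (Set.image_mono (f := w) Metric.ball_subset_closedBall)
    exact (hcompact.image_of_continuousOn hwc).bddAbove
  have hwM : ∀ x ∈ Metric.ball (0:EuclideanSpace ℝ (Fin N)) 1, w x ≤ M := by
    intro x hx
    exact le_csSup hbdd ⟨x, hx, rfl⟩
  have hM0 : 0 ≤ M := by
    have h0b : (0:EuclideanSpace ℝ (Fin N)) ∈ Metric.ball (0:EuclideanSpace ℝ (Fin N)) 1 := by
      simp
    exact le_trans (hw0 0 (Metric.ball_subset_closedBall h0b)) (hwM 0 h0b)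
  have hwMc : ∀ x ∈ Metric.closedBall (0:EuclideanSpace ℝ (Fin N)) 1, w x ≤ M := by
    intro x hx
    have hxn : ‖x‖ ≤ 1 := mem_closedBall_zero_iff.1 hx
    rcases lt_or_eq_of_le hxn with h | h
    · exact hwM x (mem_ball_zero_iff.2 h)
    · have hf : Filter.Tendsto (fun r : ℝ => r • x) (nhdsWithin 1 (Set.Iio 1)) (nhds x) := by
        have h1 : Filter.Tendsto (fun r : ℝ => r • x) (nhds 1) (nhds ((1:ℝ) • x)) :=
          (continuous_id.smul continuous_const).tendsto 1
        rw [one_smul] at h1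
        exact h1.mono_left nhdsWithin_le_nhds
      have hev : ∀ᶠ r in nhdsWithin (1:ℝ) (Set.Iio 1),
          (fun r : ℝ => r • x) r ∈ Metric.ball (0:EuclideanSpace ℝ (Fin N)) 1 := by
        filter_upwards [Ioo_mem_nhdsLT_of_mem (show (1:ℝ) ∈ Set.Ioc 0 1 by constructor <;> norm_num)]
        intro r hr
        rw [mem_ball_zero_iff, norm_smul, ← h, Real.norm_eq_abs, abs_of_pos hr.1]
        nlinarith [hr.2, norm_nonneg x, hr.1]
      have hcw : Filter.Tendsto (fun r : ℝ => w (r • x)) (nhdsWithin 1 (Set.Iio 1)) (nhds (w x)) := by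
        apply (hwc x hx).tendsto.comp
        apply tendsto_nhdsWithin_of_tendsto_nhds_of_eventually_within _ hf
        filter_upwards [hev] with r hr
        exact Metric.ball_subset_closedBall hr
      apply le_of_tendsto hcw
      filter_upwards [hev] with r hr
      exact hwM _ hr
  -- the compact set K and the maximizer of w / v
  set K : Set (EuclideanSpace ℝ (Fin N)) :=
    Metric.closedBall 0 1 ∩ {x | |⟪x, ν⟫| ≤ ε} with hKdef
  have hinner_cont : Continuous (fun x : EuclideanSpace ℝ (Fin N) => ⟪x, ν⟫) :=
    (ContDiff.inner (𝕜 := ℝ) contDiff_id (contDiff_const (c := ν)) :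
      ContDiff ℝ 2 _).continuous
  have hKclosed : IsClosed ({x : EuclideanSpace ℝ (Fin N) | |⟪x, ν⟫| ≤ ε}) :=
    isClosed_le (continuous_abs.comp hinner_cont) continuous_const
  have hKcomp : IsCompact K := hcompact.inter_right hKclosed
  have hKne : K.Nonempty := by
    refine ⟨0, ?_, ?_⟩
    · simp
    · simp only [Set.mem_setOf_eq, inner_zero_left, abs_zero]
      linarith
  have hKsub : K ⊆ Metric.closedBall 0 1 := Set.inter_subset_left
  have hvK : ∀ x ∈ K, 0 < v x := fun x hx => hv_pos x hx.2
  have hφcont : ContinuousOn (fun x => w x / v x) K :=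
    ContinuousOn.div (hwc.mono hKsub) (hsmv.continuous.continuousOn)
      (fun x hx => ne_of_gt (hvK x hx))
  obtain ⟨x₀, hx₀K, hx₀max⟩ := hKcomp.exists_isMaxOn hKne hφcont
  set κ : ℝ := w x₀ / v x₀ with hκdef
  have hκ0 : 0 ≤ κ := div_nonneg (hw0 x₀ (hKsub hx₀K)) (hvK x₀ hx₀K).le
  have hwκ : ∀ x ∈ K, w x ≤ κ * v x := by
    intro x hx
    have h1 : w x / v x ≤ κ := hx₀max hx
    have h2 := hvK x hx
    have h3 : w x = (w x / v x) * v x := by field_simp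
    rw [h3]
    exact mul_le_mul_of_nonneg_right h1 h2.le
  -- the main claim : κ ≤ 2 M e^{-m}
  have hclaim : κ ≤ 2 * M * Real.exp (-m) := by
    have hx₀cb : x₀ ∈ Metric.closedBall (0:EuclideanSpace ℝ (Fin N)) 1 := hKsub hx₀K
    have hx₀n : ‖x₀‖ ≤ 1 := mem_closedBall_zero_iff.1 hx₀cb
    rcases eq_or_lt_of_le hx₀n with hb | hblt
    · -- boundary sphere case
      have hR1 : ⟪x₀,x₀⟫ = (1:ℝ) := by rw [hRx, hb, one_pow]
      have hv1 : (1/2) * Real.exp m ≤ v x₀ := by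
        have h6 := hv_lb x₀ hx₀K.2
        rwa [hR1, mul_one] at h6
      have hwle : w x₀ ≤ M := hwMc x₀ hx₀cb
      have hv0 : 0 < v x₀ := hvK x₀ hx₀K
      rw [hκdef, div_le_iff₀ hv0]
      have hexpm : Real.exp (-m) * Real.exp m = 1 := by
        rw [← Real.exp_add]; simp
      have hmul : (2 * M * Real.exp (-m)) * ((1/2) * Real.exp m) ≤ (2 * M * Real.exp (-m)) * v x₀ :=
        mul_le_mul_of_nonneg_left hv1 (by positivity)
      nlinarith [hmul, hexpm]
    · have hstrip : |⟪x₀, ν⟫| ≤ ε := hx₀K.2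
      rcases eq_or_lt_of_le hstrip with ht | htlt
      · -- |⟪x₀,ν⟫| = ε : w vanishes at x₀ by continuity
        have hx₀ball : x₀ ∈ Metric.ball (0:EuclideanSpace ℝ (Fin N)) 1 :=
          mem_ball_zero_iff.2 hblt
        set σ : ℝ := if 0 ≤ ⟪x₀, ν⟫ then 1 else -1 with hσdef
        have hσν : ⟪x₀, ν⟫ = σ * ε := by
          rcases le_or_gt 0 ⟪x₀, ν⟫ with h | h
          · rw [hσdef, if_pos h, one_mul, ← ht, abs_of_nonneg h]
          · rw [hσdef, if_neg (not_le.2 h), ← ht, abs_of_neg h]; ring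
        have hσabs : |σ| = 1 := by
          rcases le_or_gt 0 ⟪x₀, ν⟫ with h | h
          · rw [hσdef, if_pos h]; norm_num
          · rw [hσdef, if_neg (not_le.2 h)]; norm_num
        have hwcontx : ContinuousAt w x₀ :=
          hwc.continuousAt (Filter.mem_of_superset
            (isOpen_ball.mem_nhds hx₀ball) Metric.ball_subset_closedBall)
        have htend : Filter.Tendsto (fun s : ℝ => w (x₀ + (s*σ) • ν))
            (nhdsWithin 0 (Set.Ioi 0)) (nhds (w x₀)) := by
          apply hwcontx.tendsto.comp
          have h1 : Filter.Tendsto (fun s : ℝ => x₀ + (s*σ) • ν) (nhds 0)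
              (nhds (x₀ + ((0:ℝ)*σ) • ν)) := by
            apply Filter.Tendsto.const_add
            apply Filter.Tendsto.smul_const
            exact (continuous_id.mul continuous_const).tendsto 0
          simp only [zero_mul, zero_smul, add_zero] at h1
          exact h1.mono_left nhdsWithin_le_nhds
        have hev0 : ∀ᶠ s in nhdsWithin (0:ℝ) (Set.Ioi 0),
            w (x₀ + (s*σ) • ν) = 0 := by
          filter_upwards [Ioo_mem_nhdsGT_of_mem
            (show (0:ℝ) ∈ Set.Ico 0 (1 - ‖x₀‖) by constructor <;> [norm_num; linarith])]
          intro s hs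
          apply hvan
          · rw [mem_ball_zero_iff]
            calc ‖x₀ + (s*σ) • ν‖ ≤ ‖x₀‖ + ‖(s*σ) • ν‖ := norm_add_le _ _
            _ = ‖x₀‖ + |s*σ| := by rw [norm_smul, hν, mul_one, Real.norm_eq_abs]
            _ = ‖x₀‖ + s := by rw [abs_mul, hσabs, mul_one, abs_of_pos hs.1]
            _ < 1 := by linarith [hs.2]
          · have h7 : ⟪x₀ + (s*σ) • ν, ν⟫ = σ * (ε + s) := by
              rw [inner_add_left, real_inner_smul_left, hνν, hσν]; ring
            rw [h7, abs_mul, hσabs, one_mul, abs_of_pos (by linarith [hs.1])]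
            linarith [hs.1]
        have hw0' : w x₀ = 0 := by
          have h8 : Filter.Tendsto (fun _ : ℝ => (0:ℝ))
              (nhdsWithin 0 (Set.Ioi 0)) (nhds (w x₀)) := htend.congr' hev0
          exact tendsto_nhds_unique h8 tendsto_const_nhds
        rw [hκdef, hw0', zero_div]
        positivity
      · -- interior case : contradiction via the maximum principle
        rcases le_or_gt κ 0 with hκneg | hκpos
        · exact le_trans hκneg (by positivity)
        exfalso
        have hx₀ball : x₀ ∈ Metric.ball (0:EuclideanSpace ℝ (Fin N)) 1 :=
          mem_ball_zero_iff.2 hblt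
        set U : Set (EuclideanSpace ℝ (Fin N)) :=
          Metric.ball 0 1 ∩ {x | |⟪x, ν⟫| < 3/2*ε} with hUdef
        have hUopen : IsOpen U :=
          isOpen_ball.inter (isOpen_lt (continuous_abs.comp hinner_cont) continuous_const)
        have hx₀U : x₀ ∈ U := ⟨hx₀ball, by
          show |⟪x₀, ν⟫| < 3/2*ε
          linarith⟩
        have hFU : ∀ x ∈ U, w x - κ * v x ≤ 0 := by
          intro x hx
          rcases le_or_gt (|⟪x, ν⟫|) ε with h | h
          · have hxK : x ∈ K := ⟨Metric.ball_subset_closedBall hx.1, h⟩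
            linarith [hwκ x hxK]
          · have hw0x : w x = 0 := hvan x hx.1 h
            have hvx : 0 ≤ v x := by
              have hcos := hcos_nonneg _ (le_of_lt hx.2)
              have hexx := (Real.exp_pos (m*⟪x,x⟫)).le
              rw [hvdef]
              exact mul_nonneg hcos hexx
            rw [hw0x]
            nlinarith
        have hv0 : 0 < v x₀ := hvK x₀ hx₀K
        have hFx₀ : w x₀ - κ * v x₀ = 0 := by
          rw [hκdef]
          field_simp
          ring
        have hkey : ∀ i : Fin N,
            deriv (deriv (fun s : ℝ => w (x₀ + s • EuclideanSpace.single i 1))) 0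
              - κ * deriv (deriv (fun s : ℝ => v (x₀ + s • EuclideanSpace.single i 1))) 0 ≤ 0 := by
          intro i
          set e : EuclideanSpace ℝ (Fin N) := EuclideanSpace.single i (1:ℝ) with hedef
          have hlinecd : ContDiff ℝ 2 (fun s : ℝ => x₀ + s • e) :=
            contDiff_const.add (contDiff_id.smul contDiff_const)
          have h0e : x₀ + (0:ℝ) • e = x₀ := by rw [zero_smul, add_zero]
          set W : Set ℝ := (fun s : ℝ => x₀ + s • e) ⁻¹' (Metric.ball 0 1) with hWdef
          have hWopen : IsOpen W := isOpen_ball.preimage hlinecd.continuous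
          have h0W : (0:ℝ) ∈ W := by
            rw [hWdef, Set.mem_preimage, h0e]
            exact hx₀ball
          have hwline : ContDiffOn ℝ 2 (fun s : ℝ => w (x₀ + s • e)) W :=
            hw2.comp hlinecd.contDiffOn (fun s hs => hs)
          have hvline : ContDiff ℝ 2 (fun s : ℝ => v (x₀ + s • e)) := hsmv.comp hlinecd
          have hgcd : ContDiffOn ℝ 2 (fun s : ℝ => w (x₀ + s • e) - κ * v (x₀ + s • e)) W :=
            hwline.sub (contDiff_const.mul hvline).contDiffOn
          have hmax : IsLocalMax (fun s : ℝ => w (x₀ + s • e) - κ * v (x₀ + s • e)) 0 := by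
            have hUnhd : ∀ᶠ s : ℝ in nhds 0, x₀ + s • e ∈ U := by
              have h9 : Filter.Tendsto (fun s : ℝ => x₀ + s • e) (nhds 0) (nhds x₀) := by
                have := hlinecd.continuous.tendsto 0
                rwa [h0e] at this
              exact h9.eventually (hUopen.eventually_mem hx₀U)
            filter_upwards [hUnhd] with s hs
            have h10 := hFU _ hs
            simp only [h0e]
            linarith [hFx₀]
          have htest := sd_test hWopen h0W hgcd hmax
          have hlin := deriv2_sub hWopen h0W hwline hvline κ
          rw [hlin] at htest
          exact htest
        have hlapw : lap w x₀ - κ * lap v x₀ ≤ 0 := by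
          have h1 : lap w x₀ = ∑ i, deriv (deriv
              (fun s : ℝ => w (x₀ + s • EuclideanSpace.single i 1))) 0 := by
            unfold lap
            exact Finset.sum_congr rfl (fun i _ => line_lap isOpen_ball hw2 hx₀ball _)
          have h2 : lap v x₀ = ∑ i, deriv (deriv
              (fun s : ℝ => v (x₀ + s • EuclideanSpace.single i 1))) 0 := by
            unfold lap
            exact Finset.sum_congr rfl
              (fun i _ => line_lap isOpen_univ hsmv.contDiffOn (Set.mem_univ _) _)
          rw [h1, h2, Finset.mul_sum, ← Finset.sum_sub_distrib]
          exact Finset.sum_nonpos (fun i _ => hkey i)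
        -- lower bound for -lap v x₀
        have hcoef : a + 1 ≤ l^2 - 4*m^2 - 2*m*N := by
          have e1 : l^2 - 4*m^2 = Real.pi^2/(12*ε^2) := by
            rw [hldef, hmdef]; field_simp; ring
          have e2 : 2*m*(N:ℝ) = Real.pi*N/(6*ε) := by
            rw [hmdef]; field_simp; ring
          have e3 : Real.pi*(N:ℝ)/(6*ε) ≤ Real.pi^2/(24*ε^2) := by
            rw [div_le_div_iff₀ (by positivity) (by positivity)]
            have h11 := (le_div_iff₀ (by positivity : (0:ℝ) < 4*N)).1 hε1
            nlinarith [mul_le_mul_of_nonneg_left h11 (show (0:ℝ) ≤ 6*Real.pi*ε by positivity)]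
          have e4 : a + 1 ≤ Real.pi^2/(24*ε^2) := by
            have hK24 : (0:ℝ) ≤ 24*(a+1) := by linarith
            have h12 := (le_div_iff₀ hsq).1 hε2
            have h13 : ε^2 * (24*(a+1)) ≤ Real.pi^2 := by
              nlinarith [Real.mul_self_sqrt hK24,
                mul_self_le_mul_self (by positivity : (0:ℝ) ≤ ε * Real.sqrt (24*(a+1))) h12]
            rw [le_div_iff₀ (by positivity)]
            nlinarith
          have e5 : Real.pi^2/(12*ε^2) = Real.pi^2/(24*ε^2) + Real.pi^2/(24*ε^2) := by
            field_simp; ring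
          linarith
        have hlapv : (a+1) * v x₀ ≤ -lap v x₀ := by
          have hval : lap v x₀ = Real.exp (m*⟪x₀,x₀⟫) *
              ((4*m^2*⟪x₀,x₀⟫ + 2*m*N - l^2) * Real.cos (l*⟪x₀,ν⟫)
                - 4*l*m*⟪x₀,ν⟫*Real.sin (l*⟪x₀,ν⟫)) := by
            rw [hvdef, lap_v l m ν x₀, hνν, mul_one]
          have hvx₀ : v x₀ = Real.cos (l*⟪x₀,ν⟫) * Real.exp (m*⟪x₀,x₀⟫) := by
            rw [hvdef]
          rw [hval, hvx₀]
          have hR0 : (0:ℝ) ≤ ⟪x₀,x₀⟫ := real_inner_self_nonneg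
          have hR1 : ⟪x₀,x₀⟫ ≤ 1 := by rw [hRx]; nlinarith [norm_nonneg x₀]
          have hcos := hcos_half _ hx₀K.2
          have hts := htsin ⟪x₀,ν⟫ (by linarith [hx₀K.2])
          have hE := Real.exp_pos (m*⟪x₀,x₀⟫)
          have h4 : (0:ℝ) ≤ Real.exp (m*⟪x₀,x₀⟫) * (4*l*m) *
              (⟪x₀,ν⟫ * Real.sin (l*⟪x₀,ν⟫)) := by
            apply mul_nonneg (by positivity) hts
          have h5 : (a+1) * Real.cos (l*⟪x₀,ν⟫) ≤
              (l^2 - 4*m^2*⟪x₀,x₀⟫ - 2*m*N) * Real.cos (l*⟪x₀,ν⟫) := by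
            apply mul_le_mul_of_nonneg_right _ (by linarith)
            nlinarith
          nlinarith [mul_le_mul_of_nonneg_left h5 hE.le, h4]
        have hPDE := hsubsol x₀ hx₀ball
        have hwv : w x₀ = κ * v x₀ := by linear_combination hFx₀
        nlinarith [mul_le_mul_of_nonneg_left hlapv hκpos.le, mul_pos hκpos hv0]
  -- conclusion
  have himg : (w '' Metric.ball (0:EuclideanSpace ℝ (Fin N)) (1/2)).Nonempty := by
    refine ⟨w 0, 0, ?_, rfl⟩
    simp
  apply csSup_le himg
  rintro y ⟨x, hx, rfl⟩
  show w x ≤ Real.exp (-(Real.pi/32) / ε) * M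
  have hx1 : x ∈ Metric.ball (0:EuclideanSpace ℝ (Fin N)) 1 := by
    have := mem_ball_zero_iff.1 hx
    exact mem_ball_zero_iff.2 (by linarith)
  have hRHS0 : 0 ≤ Real.exp (-(Real.pi/32) / ε) * M := by positivity
  rcases le_or_gt (|⟪x, ν⟫|) ε with hcase | hcase
  · -- x in the strip : use the barrier bound
    have hxK : x ∈ K := ⟨Metric.ball_subset_closedBall hx1, hcase⟩
    have h1 : w x ≤ κ * v x := hwκ x hxK
    have hvx_ub : v x ≤ Real.exp (m * (1/4)) := by
      have hcos1 : Real.cos (l * ⟪x, ν⟫) ≤ 1 := Real.cos_le_one _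
      have hxx : ⟪x,x⟫ ≤ 1/4 := by
        rw [hRx]
        have h5 := mem_ball_zero_iff.1 hx
        nlinarith [norm_nonneg x]
      have he1 : Real.exp (m * ⟪x,x⟫) ≤ Real.exp (m * (1/4)) := by
        apply Real.exp_le_exp.2; nlinarith
      have he0 : (0:ℝ) < Real.exp (m * ⟪x,x⟫) := Real.exp_pos _
      rw [hvdef]
      simp only
      nlinarith [hcos_half _ hcase]
    have h2 : w x ≤ 2 * M * Real.exp (-m) * Real.exp (m * (1/4)) := by
      have hvx0 := hvK x hxK
      calc w x ≤ κ * v x := h1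
      _ ≤ (2 * M * Real.exp (-m)) * v x := by nlinarith
      _ ≤ 2 * M * Real.exp (-m) * Real.exp (m * (1/4)) := by
          have h3 : (0:ℝ) ≤ 2 * M * Real.exp (-m) := by positivity
          nlinarith
    have hexp_comb : Real.exp (-m) * Real.exp (m * (1/4)) = Real.exp (-(3/4*m)) := by
      rw [← Real.exp_add]; ring_nf
    have hfinal : 2 * Real.exp (-(3/4*m)) ≤ Real.exp (-(Real.pi/32) / ε) := by
      have hlog : Real.log 2 ≤ Real.pi/(32*ε) := by
        have h4 := (le_div_iff₀ (by positivity : (0:ℝ) < 32*Real.log 2)).1 hε3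
        rw [le_div_iff₀ (by positivity : (0:ℝ) < 32*ε)]
        nlinarith
      have h2exp : (2:ℝ) = Real.exp (Real.log 2) := (Real.exp_log (by norm_num)).symm
      rw [h2exp, ← Real.exp_add]
      apply Real.exp_le_exp.2
      have hm34 : 3/4*m = Real.pi/(16*ε) := by rw [hmdef]; field_simp; ring
      have hsplit : Real.pi/(16*ε) = Real.pi/(32*ε) + Real.pi/(32*ε) := by
        field_simp; ring
      have hdd : -(Real.pi/32)/ε = -(Real.pi/(32*ε)) := by
        rw [neg_div, div_div]
      rw [hm34, hdd]
      linarith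
    calc w x ≤ 2 * M * Real.exp (-m) * Real.exp (m * (1/4)) := h2
    _ = M * (2 * Real.exp (-(3/4*m))) := by rw [← hexp_comb]; ring
    _ ≤ M * Real.exp (-(Real.pi/32) / ε) := by nlinarith [Real.exp_pos (-(3/4*m))]
    _ = Real.exp (-(Real.pi/32) / ε) * M := by ring
  · -- x outside the strip : w x = 0
    rw [hvan x hx1 hcase]
    exact hRHS0
end

section
/- Let N ∈ ℕ with N ≥ 2, let Ω ⊆ ℝᴺ be open, let w : ℝᴺ → ℝ be C² on Ω, and let Y : ℝᴺ → ℝᴺ be a C¹ vector field with compact support contained in Ω. Then ∫_Ω ⟨∇w(x), ∇(∇w·Y)(x)⟩ dx = ∫_Ω ( ⟨(DY(x))∇w(x), ∇w(x)⟩ − ½ |∇w(x)|² (div Y)(x) ) dx, where ∇w·Y denotes the scalar function x ↦ ⟨∇w(x), Y(x)⟩. -/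
open MeasureTheory Metric Set Function Filter Topology
open scoped RealInnerProductSpace Manifold

variable {N : ℕ}

local notation "E" => EuclideanSpace ℝ (Fin N)

lemma inner_grad (f : E → ℝ) (x v : E) : ⟪gradient f x, v⟫ = fderiv ℝ f x v :=
  InnerProductSpace.toDual_symm_apply

lemma contDiff_gradient {g : E → ℝ} (hg : ContDiff ℝ 2 g) : ContDiff ℝ 1 (gradient g) := by
  have : gradient g = fun x => (InnerProductSpace.toDual ℝ E).symm (fderiv ℝ g x) := rfl
  rw [this]
  exact (InnerProductSpace.toDual ℝ E).symm.contDiff.comp (hg.fderiv_right (by norm_num))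

lemma fderiv_gradient_inner {g : E → ℝ} (hg : ContDiff ℝ 2 g) (x v u : E) :
    ⟪fderiv ℝ (gradient g) x v, u⟫ = fderiv ℝ (fderiv ℝ g) x v u := by
  have h1 : gradient g = (InnerProductSpace.toDual ℝ E).symm ∘ (fderiv ℝ g) := rfl
  rw [h1, LinearIsometryEquiv.comp_fderiv]
  simp only [ContinuousLinearMap.coe_comp', Function.comp_apply,
    LinearIsometryEquiv.coe_coe]
  exact InnerProductSpace.toDual_symm_apply

lemma fderiv_grad_symm {g : E → ℝ} (hg : ContDiff ℝ 2 g) (x v u : E) :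
    ⟪fderiv ℝ (gradient g) x v, u⟫ = ⟪fderiv ℝ (gradient g) x u, v⟫ := by
  rw [fderiv_gradient_inner hg, fderiv_gradient_inner hg]
  exact (hg.contDiffAt.isSymmSndFDerivAt (by simp)) v u

lemma euclidean_decomp (v : E) : ∑ i : Fin N, v i • EuclideanSpace.single i 1 = v := by
  have := (EuclideanSpace.basisFun (Fin N) ℝ).sum_repr v
  simpa [EuclideanSpace.basisFun_apply, EuclideanSpace.basisFun_repr] using this

lemma integral_fderiv_apply_eq {F : E → ℝ} (hF : ContDiff ℝ 1 F)
    {Y : E → E} (hY : ContDiff ℝ 1 Y) (hYc : HasCompactSupport Y) :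
    ∫ x, fderiv ℝ F x (Y x) = - ∫ x, F x * divg Y x := by
  set e : Fin N → E := fun i => EuclideanSpace.single i 1 with he
  have hYi : ∀ i, ContDiff ℝ 1 (fun y => Y y i) := fun i =>
    (EuclideanSpace.proj (𝕜 := ℝ) i).contDiff.comp hY
  have hYci : ∀ i, HasCompactSupport (fun y => Y y i) := fun i =>
    hYc.comp_left (g := fun v : E => v i) rfl
  have hFC : Continuous F := hF.continuous
  have hFd : Continuous (fderiv ℝ F) := hF.continuous_fderiv one_ne_zero
  have hI1 : ∀ i, Integrable (fun x => fderiv ℝ F x (e i) * Y x i) := by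
    intro i
    refine Continuous.integrable_of_hasCompactSupport
      ((hFd.clm_apply continuous_const).mul ((hYi i).continuous)) ?_
    apply (hYci i).mono'
    intro x hx
    simp only [mem_support, ne_eq] at hx
    refine subset_tsupport _ ?_
    simp only [mem_support, ne_eq]
    intro h0
    exact hx (by rw [h0, mul_zero])
  have hI2 : ∀ i, Integrable (fun x => F x * fderiv ℝ (fun y => Y y i) x (e i)) := by
    intro i
    refine Continuous.integrable_of_hasCompactSupport
      (hFC.mul (((hYi i).continuous_fderiv one_ne_zero).clm_apply continuous_const)) ?_
    refine ((hYci i).fderiv ℝ).mono' ?_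
    intro x hx
    simp only [mem_support, ne_eq] at hx
    have : fderiv ℝ (fun y => Y y i) x ≠ 0 := by
      intro h0
      exact hx (by rw [h0]; simp)
    exact subset_tsupport _ this
  have hI3 : ∀ i, Integrable (fun x => F x * Y x i) := by
    intro i
    refine Continuous.integrable_of_hasCompactSupport (hFC.mul ((hYi i).continuous)) ?_
    apply (hYci i).mono'
    intro x hx
    simp only [mem_support, ne_eq] at hx
    refine subset_tsupport _ ?_
    simp only [mem_support, ne_eq]
    intro h0
    exact hx (by rw [h0, mul_zero])
  have key : ∀ i, ∫ x, fderiv ℝ F x (e i) * Y x i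
      = - ∫ x, F x * fderiv ℝ (fun y => Y y i) x (e i) := by
    intro i
    have := integral_mul_fderiv_eq_neg_fderiv_mul_of_integrable (μ := volume)
      (f := F) (g := fun y => Y y i) (v := e i) (hI1 i) (hI2 i) (hI3 i)
      (fun x _ => hF.differentiable one_ne_zero x) (fun x _ => (hYi i).differentiable one_ne_zero x)
    linarith [this]
  have hdecomp : ∀ x, fderiv ℝ F x (Y x) = ∑ i : Fin N, fderiv ℝ F x (e i) * Y x i := by
    intro x
    conv_lhs => rw [← euclidean_decomp (Y x)]
    rw [map_sum]
    refine Finset.sum_congr rfl fun i _ => ?_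
    rw [ContinuousLinearMap.map_smul, smul_eq_mul, mul_comm]
  calc ∫ x, fderiv ℝ F x (Y x) = ∫ x, ∑ i : Fin N, fderiv ℝ F x (e i) * Y x i := by
        simp_rw [hdecomp]
    _ = ∑ i : Fin N, ∫ x, fderiv ℝ F x (e i) * Y x i :=
        integral_finset_sum _ (fun i _ => hI1 i)
    _ = ∑ i : Fin N, - ∫ x, F x * fderiv ℝ (fun y => Y y i) x (e i) := by
        exact Finset.sum_congr rfl fun i _ => key i
    _ = - ∫ x, F x * divg Y x := by
        rw [Finset.sum_neg_distrib, ← integral_finset_sum _ (fun i _ => hI2 i)]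
        congr 1
        refine integral_congr_ae (Filter.Eventually.of_forall fun x => ?_)
        simp [divg, Finset.mul_sum, he]

lemma divg_eq_zero_of_nmem {Y : E → E} {x : E} (hx : x ∉ tsupport Y) : divg Y x = 0 := by
  have h : ∀ i : Fin N, fderiv ℝ (fun y => Y y i) x = 0 := by
    intro i
    have hsub : tsupport (fun y => Y y i) ⊆ tsupport Y :=
      closure_mono (fun y hy => by
        simp only [mem_support, ne_eq] at hy ⊢
        intro h0; exact hy (by rw [h0]; rfl))
    have : x ∉ support (fderiv ℝ (fun y => Y y i)) :=
      fun hc => hx (hsub (support_fderiv_subset ℝ hc))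
    simpa [mem_support, not_not] using this
  simp [divg, h]

lemma continuous_divg {Y : E → E} (hY : ContDiff ℝ 1 Y) : Continuous (divg Y) := by
  refine continuous_finset_sum _ fun i _ => ?_
  exact ((((EuclideanSpace.proj (𝕜 := ℝ) i).contDiff.comp hY)).continuous_fderiv
    one_ne_zero).clm_apply continuous_const

lemma fderiv_eq_zero_of_nmem {Y : E → E} {x : E} (hx : x ∉ tsupport Y) : fderiv ℝ Y x = 0 := by
  by_contra hc
  exact hx (support_fderiv_subset ℝ (by simpa [mem_support] using hc))

lemma core {g : E → ℝ} (hg : ContDiff ℝ 2 g)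
    {Y : E → E} (hY : ContDiff ℝ 1 Y) (hYc : HasCompactSupport Y) :
    ∫ x, ⟪gradient g x, gradient (fun y => ⟪gradient g y, Y y⟫) x⟫
      = ∫ x, (⟪fderiv ℝ Y x (gradient g x), gradient g x⟫
          - (1 / 2) * ‖gradient g x‖ ^ 2 * divg Y x) := by
  have hG : ContDiff ℝ 1 (gradient g) := contDiff_gradient hg
  have hGd : Differentiable ℝ (gradient g) := hG.differentiable one_ne_zero
  have hYd : Differentiable ℝ Y := hY.differentiable one_ne_zero
  set G := gradient g with hGdef
  set F : E → ℝ := fun x => ⟪G x, G x⟫ with hFdef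
  have hF : ContDiff ℝ 1 F := hG.inner ℝ hG
  have hfdF : ∀ x (v : E), fderiv ℝ F x v = 2 * ⟪fderiv ℝ G x v, G x⟫ := by
    intro x v
    rw [hFdef]
    rw [fderiv_inner_apply ℝ (hGd x) (hGd x) v, real_inner_comm (G x)]
    ring
  have hpt : ∀ x, ⟪G x, gradient (fun y => ⟪G y, Y y⟫) x⟫
      = ⟪fderiv ℝ Y x (G x), G x⟫ + (1/2) * fderiv ℝ F x (Y x) := by
    intro x
    rw [real_inner_comm, inner_grad]
    rw [fderiv_inner_apply ℝ (hGd x) (hYd x) (G x)]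
    rw [hfdF x (Y x)]
    rw [fderiv_grad_symm hg x (G x) (Y x)]
    rw [real_inner_comm (G x) (fderiv ℝ Y x (G x))]
    ring
  have hA : Integrable (fun x => ⟪fderiv ℝ Y x (G x), G x⟫) := by
    refine Continuous.integrable_of_hasCompactSupport
      (((hY.continuous_fderiv one_ne_zero).clm_apply hG.continuous).inner hG.continuous) ?_
    refine (hYc.fderiv ℝ).mono' ?_
    intro x hx
    simp only [mem_support, ne_eq] at hx
    refine subset_tsupport _ ?_
    simp only [mem_support, ne_eq]
    intro h0
    exact hx (by rw [h0]; simp)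
  have hB : Integrable (fun x => (1/2 : ℝ) * fderiv ℝ F x (Y x)) := by
    refine Continuous.integrable_of_hasCompactSupport
      (continuous_const.mul ((hF.continuous_fderiv one_ne_zero).clm_apply hY.continuous)) ?_
    refine hYc.mono' ?_
    intro x hx
    simp only [mem_support, ne_eq] at hx
    refine subset_tsupport _ ?_
    simp only [mem_support, ne_eq]
    intro h0
    exact hx (by rw [h0]; simp)
  have hC : Integrable (fun x => (1/2 : ℝ) * F x * divg Y x) := by
    refine Continuous.integrable_of_hasCompactSupport
      ((continuous_const.mul hF.continuous).mul (continuous_divg hY)) ?_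
    refine hYc.mono' ?_
    intro x hx
    simp only [mem_support, ne_eq] at hx
    by_contra hxt
    exact hx (by rw [divg_eq_zero_of_nmem hxt, mul_zero])
  calc ∫ x, ⟪G x, gradient (fun y => ⟪G y, Y y⟫) x⟫
      = ∫ x, (⟪fderiv ℝ Y x (G x), G x⟫ + (1/2 : ℝ) * fderiv ℝ F x (Y x)) := by
        simp_rw [hpt]
    _ = (∫ x, ⟪fderiv ℝ Y x (G x), G x⟫) + (1/2 : ℝ) * ∫ x, fderiv ℝ F x (Y x) := by
        rw [integral_add hA hB, integral_const_mul]
    _ = (∫ x, ⟪fderiv ℝ Y x (G x), G x⟫) - (1/2 : ℝ) * ∫ x, F x * divg Y x := by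
        rw [integral_fderiv_apply_eq hF hY hYc]; ring
    _ = (∫ x, ⟪fderiv ℝ Y x (G x), G x⟫) - ∫ x, (1/2 : ℝ) * F x * divg Y x := by
        rw [show (fun x => (1/2:ℝ) * F x * divg Y x) = fun x => (1/2:ℝ) * (F x * divg Y x) by
          funext x; ring, integral_const_mul]
    _ = ∫ x, (⟪fderiv ℝ Y x (G x), G x⟫ - (1 / 2) * ‖G x‖ ^ 2 * divg Y x) := by
        rw [← integral_sub hA]
        · refine integral_congr_ae (Filter.Eventually.of_forall fun x => ?_)
          simp only [hFdef]
          rw [real_inner_self_eq_norm_sq]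
        · exact hC

lemma cutoff {N : ℕ} {K U : Set (EuclideanSpace ℝ (Fin N))} (hK : IsCompact K)
    (hU : IsOpen U) (hKU : K ⊆ U) :
    ∃ χ : EuclideanSpace ℝ (Fin N) → ℝ, ContDiff ℝ ((⊤ : ℕ∞) : WithTop ℕ∞) χ ∧ HasCompactSupport χ ∧
      tsupport χ ⊆ U ∧ ∀ᶠ x in 𝓝ˢ K, χ x = 1 := by
  obtain ⟨L, hL, hKL, hLU⟩ := exists_compact_between hK hU hKU
  obtain ⟨f, hf0, hf1, -⟩ := exists_contMDiffMap_zero_one_nhds_of_isClosed (n := (⊤ : ℕ∞))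
    (𝓘(ℝ, EuclideanSpace ℝ (Fin N))) (isOpen_interior (s := L)).isClosed_compl hK.isClosed
    (by simpa [Set.disjoint_compl_left_iff_subset] using hKL)
  have hsupp : support f ⊆ interior L := by
    intro x hx
    by_contra hxL
    exact hx (hf0.self_of_nhdsSet x hxL)
  have htsupp : tsupport f ⊆ L := closure_minimal (hsupp.trans interior_subset) hL.isClosed
  refine ⟨f, ?_, ?_, htsupp.trans hLU, hf1⟩
  · exact contMDiff_iff_contDiff.mp f.contMDiff
  · exact HasCompactSupport.of_support_subset_isCompact hL (hsupp.trans interior_subset)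

lemma grad_zero_of_loc_zero {f : E → ℝ} {x : E} (h : f =ᶠ[𝓝 x] 0) : gradient f x = 0 := by
  have h1 : fderiv ℝ f x = fderiv ℝ (fun _ : E => (0 : ℝ)) x := h.fderiv_eq
  have h2 : fderiv ℝ (fun _ : E => (0 : ℝ)) x = 0 := fderiv_const_apply 0
  show (InnerProductSpace.toDual ℝ E).symm (fderiv ℝ f x) = 0
  rw [h1, h2, map_zero]

/-- integration-by-parts identity
`∫_Ω ⟨∇w, ∇(∇w·Y)⟩ = ∫_Ω (⟨(DY)∇w, ∇w⟩ − ½|∇w|² div Y)`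
for `w` of class `C²` on `Ω` and a `C¹` vector field `Y` compactly supported in `Ω`. -/
theorem stmt14 (N : ℕ) (hN : 2 ≤ N) (Ω : Set (EuclideanSpace ℝ (Fin N))) (hΩ : IsOpen Ω)
    (w : EuclideanSpace ℝ (Fin N) → ℝ) (hw : ContDiffOn ℝ 2 w Ω)
    (Y : EuclideanSpace ℝ (Fin N) → EuclideanSpace ℝ (Fin N))
    (hY : ContDiff ℝ 1 Y) (hYc : HasCompactSupport Y) (hYs : tsupport Y ⊆ Ω) :
    ∫ x in Ω, ⟪gradient w x, gradient (fun y => ⟪gradient w y, Y y⟫) x⟫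
      = ∫ x in Ω, (⟪fderiv ℝ Y x (gradient w x), gradient w x⟫
          - (1 / 2) * ‖gradient w x‖ ^ 2 * divg Y x) := by
  obtain ⟨χ, hχ, hχc, hχs, hχ1⟩ := cutoff hYc hΩ hYs
  set U : Set (EuclideanSpace ℝ (Fin N)) := {x | ∀ᶠ y in 𝓝 x, χ y = 1} with hUdef
  have hKU : tsupport Y ⊆ U := fun x hx =>
    eventually_nhdsSet_iff_forall.mp hχ1 x hx
  set g : EuclideanSpace ℝ (Fin N) → ℝ := fun x => χ x * w x with hgdef
  have hg2 : ContDiff ℝ 2 g := by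
    rw [contDiff_iff_contDiffAt]
    intro x
    by_cases hx : x ∈ Ω
    · exact ((hχ.of_le (by rw [show ((2:WithTop ℕ∞)) = ((2:ℕ∞):WithTop ℕ∞) from rfl]; exact WithTop.coe_le_coe.mpr le_top)).contDiffAt).mul (hw.contDiffAt (hΩ.mem_nhds hx))
    · have hxs : x ∉ tsupport χ := fun h => hx (hχs h)
      have h0 : χ =ᶠ[𝓝 x] 0 := notMem_tsupport_iff_eventuallyEq.mp hxs
      exact contDiffAt_const (c := (0:ℝ)) |>.congr_of_eventuallyEq
        (h0.mono fun y hy => by simp [hgdef, hy])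
  have hgw : ∀ x ∈ U, gradient w x = gradient g x := by
    intro x hx
    have heq : w =ᶠ[𝓝 x] g := hx.mono fun y hy => by simp [hgdef, hy]
    show (InnerProductSpace.toDual ℝ (EuclideanSpace ℝ (Fin N))).symm (fderiv ℝ w x)
      = (InnerProductSpace.toDual ℝ (EuclideanSpace ℝ (Fin N))).symm (fderiv ℝ g x)
    rw [heq.fderiv_eq]
  have hY0 : ∀ x ∉ tsupport Y, Y x = 0 := fun x hx => image_eq_zero_of_notMem_tsupport hx
  have hzero : ∀ x ∉ tsupport Y, gradient (fun y => ⟪gradient g y, Y y⟫) x = 0 := by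
    intro x hx
    refine grad_zero_of_loc_zero ?_
    have h0 : Y =ᶠ[𝓝 x] 0 := notMem_tsupport_iff_eventuallyEq.mp hx
    exact h0.mono fun y hy => by simp [hy]
  have hfun : (fun y => ⟪gradient w y, Y y⟫) = (fun y => ⟪gradient g y, Y y⟫) := by
    funext y
    by_cases hy : y ∈ U
    · rw [hgw y hy]
    · have : Y y = 0 := hY0 y (fun h => hy (hKU h))
      simp [this]
  rw [hfun]
  have hLHS : (fun x => ⟪gradient w x, gradient (fun y => ⟪gradient g y, Y y⟫) x⟫)
      = fun x => ⟪gradient g x, gradient (fun y => ⟪gradient g y, Y y⟫) x⟫ := by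
    funext x
    by_cases hx : x ∈ U
    · rw [hgw x hx]
    · rw [hzero x (fun h => hx (hKU h))]
      simp
  have hRHS : (fun x => ⟪fderiv ℝ Y x (gradient w x), gradient w x⟫
        - (1 / 2) * ‖gradient w x‖ ^ 2 * divg Y x)
      = fun x => (⟪fderiv ℝ Y x (gradient g x), gradient g x⟫
        - (1 / 2) * ‖gradient g x‖ ^ 2 * divg Y x) := by
    funext x
    by_cases hx : x ∈ U
    · rw [hgw x hx]
    · have hxt : x ∉ tsupport Y := fun h => hx (hKU h)
      rw [fderiv_eq_zero_of_nmem hxt, divg_eq_zero_of_nmem hxt]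
      simp
  rw [hLHS, hRHS]
  have hL0 : ∀ x ∉ Ω, ⟪gradient g x, gradient (fun y => ⟪gradient g y, Y y⟫) x⟫ = (0:ℝ) := by
    intro x hx
    rw [hzero x (fun h => hx (hYs h))]
    simp
  have hR0 : ∀ x ∉ Ω, ⟪fderiv ℝ Y x (gradient g x), gradient g x⟫
      - (1 / 2) * ‖gradient g x‖ ^ 2 * divg Y x = (0:ℝ) := by
    intro x hx
    have hxt : x ∉ tsupport Y := fun h => hx (hYs h)
    rw [fderiv_eq_zero_of_nmem hxt, divg_eq_zero_of_nmem hxt]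
    simp
  rw [setIntegral_eq_integral_of_forall_compl_eq_zero hL0,
    setIntegral_eq_integral_of_forall_compl_eq_zero hR0]
  exact core hg2 hY hYc
end
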